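/- arXiv:math/0010261 — 7 statements merged into one kernel-verified Lean document; each statement's English description precedes it below -/
import Mathlib

section
/- Let X and Y be Tychonoff (completely regular Hausdorff) spaces, E and F nontrivial real normed vector spaces, and T : C*(X,E) → C*(Y,F) a biseparating map. If f, g ∈ C*(X,E) satisfy c(f) ⊆ c(g), then for every y ∈ Y with (Tf)(y) ≠ 0, the point ι_Y(y) belongs to the closure in StoneCech Y of ι_Y(c(Tg)), where c(Tg) = {y' ∈ Y : (Tg)(y') ≠ 0}. -/
open scoped BoundedContinuousFunction

/-- For a biseparating `T : C*(X,E) → C*(Y,F)`, if `c(f) ⊆ c(g)` then for every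
`y ∈ Y` with `(Tf)(y) ≠ 0`, the point `ι_Y(y)` lies in the closure in `StoneCech Y` of
`ι_Y(c(Tg))`. -/
theorem stmt_10 {X Y E F : Type*}
    [TopologicalSpace X] [T35Space X] [TopologicalSpace Y] [T35Space Y]
    [NormedAddCommGroup E] [NormedSpace ℝ E] [Nontrivial E]
    [NormedAddCommGroup F] [NormedSpace ℝ F] [Nontrivial F]
    (T : (X →ᵇ E) → (Y →ᵇ F))
    (hbij : Function.Bijective T)
    (hadd : ∀ f g : X →ᵇ E, T (f + g) = T f + T g)
    (hsep : ∀ f g : X →ᵇ E, (∀ x, ‖f x‖ * ‖g x‖ = 0) → ∀ y, ‖T f y‖ * ‖T g y‖ = 0)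
    (hsep' : ∀ f g : X →ᵇ E, (∀ y, ‖T f y‖ * ‖T g y‖ = 0) → ∀ x, ‖f x‖ * ‖g x‖ = 0)
    (f g : X →ᵇ E) (hfg : {x : X | f x ≠ 0} ⊆ {x : X | g x ≠ 0})
    (y : Y) (hy : T f y ≠ 0) :
    stoneCechUnit y ∈ closure (stoneCechUnit '' {y' : Y | T g y' ≠ 0}) := by
  by_contra hmem
  -- Urysohn function on the Stone–Čech compactification
  obtain ⟨φ, hφ0, hφ1, hφmem⟩ :=
    exists_continuous_zero_one_of_isClosed (X := StoneCech Y)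
      isClosed_closure (isClosed_singleton (x := stoneCechUnit y))
      (by simpa [Set.disjoint_singleton_right] using hmem)
  -- k = (φ ∘ ι) • T f
  have habs : ∀ z : StoneCech Y, ‖φ z‖ ≤ 1 := by
    intro z; rw [Real.norm_eq_abs, abs_le]
    exact ⟨le_trans (by norm_num) (hφmem z).1, (hφmem z).2⟩
  set k : Y →ᵇ F := BoundedContinuousFunction.ofNormedAddCommGroup
      (fun y' => φ (stoneCechUnit y') • T f y')
      ((φ.continuous.comp continuous_stoneCechUnit).smul (T f).continuous) ‖T f‖
      (by
        intro y'
        calc ‖φ (stoneCechUnit y') • T f y'‖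
            = ‖φ (stoneCechUnit y')‖ * ‖T f y'‖ := norm_smul _ _
          _ ≤ 1 * ‖T f‖ := by
              exact mul_le_mul (habs _) ((T f).norm_coe_le_norm y') (norm_nonneg _)
                zero_le_one
          _ = ‖T f‖ := one_mul _) with hk
  have hkapp : ∀ y' : Y, k y' = φ (stoneCechUnit y') • T f y' := fun _ => rfl
  obtain ⟨h, hh⟩ := hbij.2 k
  -- k vanishes on c(Tg)
  have h1 : ∀ y', ‖T h y'‖ * ‖T g y'‖ = 0 := by
    intro y'
    by_cases hz : T g y' = 0
    · simp [hz]
    · have : stoneCechUnit y' ∈ closure (stoneCechUnit '' {y' : Y | T g y' ≠ 0}) :=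
        subset_closure ⟨y', hz, rfl⟩
      have : φ (stoneCechUnit y') = 0 := hφ0 this
      rw [hh, hkapp, this, zero_smul, norm_zero, zero_mul]
  have h2 : ∀ x, ‖h x‖ * ‖g x‖ = 0 := hsep' h g h1
  have h3 : ∀ x, ‖h x‖ * ‖f x‖ = 0 := by
    intro x
    by_cases hx : f x = 0
    · simp [hx]
    · have : g x ≠ 0 := hfg hx
      have := h2 x
      rcases mul_eq_zero.1 this with h' | h'
      · rw [h', zero_mul]
      · exact absurd (norm_eq_zero.1 h') ‹g x ≠ 0›
  have h4 := hsep h f h3 y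
  have hky : T h y = T f y := by
    rw [hh, hkapp, hφ1 rfl, Pi.one_apply, one_smul]
  rw [hky, mul_eq_zero] at h4
  rcases h4 with h' | h' <;> exact hy (norm_eq_zero.1 h')
end

section
/- Let X and Y be Tychonoff (completely regular Hausdorff) spaces, E and F nontrivial real normed vector spaces, and T : C*(X,E) → C*(Y,F) a biseparating map. Then for every y ∈ Y there exists a unique support point of y in StoneCech X, i.e. a unique point x ∈ StoneCech X such that for every open neighborhood U of x in StoneCech X there exists f ∈ C*(X,E) with cozero set c(f) ⊆ ι_X⁻¹(U) and (Tf)(y) ≠ 0. -/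
open scoped BoundedContinuousFunction
open Set

/-- `x ∈ StoneCech X` is a support point of `y ∈ Y` (relative to a map
`T : C*(X,E) → C*(Y,F)`) if for every open neighborhood `U` of `x` in `StoneCech X` there is
`f ∈ C*(X,E)` with cozero set contained in `ι_X⁻¹(U)` and `(Tf)(y) ≠ 0`. -/
def IsSupportPoint {X Y E F : Type*} [TopologicalSpace X] [TopologicalSpace Y]
    [NormedAddCommGroup E] [NormedAddCommGroup F]
    (T : (X →ᵇ E) → (Y →ᵇ F)) (y : Y) (x : StoneCech X) : Prop :=
  ∀ U : Set (StoneCech X), IsOpen U → x ∈ U →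
    ∃ f : X →ᵇ E, {x' : X | f x' ≠ 0} ⊆ stoneCechUnit ⁻¹' U ∧ T f y ≠ 0

/-- Multiply a bounded continuous `E`-valued function by a real-valued continuous function
on `StoneCech X`, precomposed with the unit map. -/
noncomputable def bcfSmul {X E : Type*} [TopologicalSpace X]
    [NormedAddCommGroup E] [NormedSpace ℝ E]
    (φ : C(StoneCech X, ℝ)) (f : X →ᵇ E) : X →ᵇ E :=
  BoundedContinuousFunction.ofNormedAddCommGroup
    (fun x => φ (stoneCechUnit x) • f x)
    ((φ.continuous.comp continuous_stoneCechUnit).smul f.continuous)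
    (‖φ‖ * ‖f‖)
    (by
      intro x
      rw [norm_smul]
      exact mul_le_mul (φ.norm_coe_le_norm _) (f.norm_coe_le_norm _)
        (norm_nonneg _) (norm_nonneg _))

theorem bcfSmul_apply {X E : Type*} [TopologicalSpace X]
    [NormedAddCommGroup E] [NormedSpace ℝ E]
    (φ : C(StoneCech X, ℝ)) (f : X →ᵇ E) (x : X) :
    bcfSmul φ f x = φ (stoneCechUnit x) • f x := rfl

theorem addHom_finset_sum {A B : Type*} [AddCommGroup A] [AddCommGroup B]
    (T : A → B) (hadd : ∀ f g : A, T (f + g) = T f + T g) :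
    ∀ {ι : Type*} (s : Finset ι) (g : ι → A), T (∑ i ∈ s, g i) = ∑ i ∈ s, T (g i) := by
  have hT0 : T 0 = 0 := by
    have h := hadd 0 0
    rw [add_zero] at h
    exact add_eq_left.mp h.symm
  intro ι s g
  induction s using Finset.cons_induction with
  | empty => simpa using hT0
  | cons a s ha ih =>
    rw [Finset.sum_cons, hadd, ih, Finset.sum_cons]

/-- For a biseparating `T : C*(X,E) → C*(Y,F)` and every `y ∈ Y`, there exists
a unique support point of `y` in `StoneCech X`. -/
theorem stmt_11 {X Y E F : Type*}
    [TopologicalSpace X] [T35Space X] [TopologicalSpace Y] [T35Space Y]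
    [NormedAddCommGroup E] [NormedSpace ℝ E] [Nontrivial E]
    [NormedAddCommGroup F] [NormedSpace ℝ F] [Nontrivial F]
    (T : (X →ᵇ E) → (Y →ᵇ F))
    (hbij : Function.Bijective T)
    (hadd : ∀ f g : X →ᵇ E, T (f + g) = T f + T g)
    (hsep : ∀ f g : X →ᵇ E, (∀ x, ‖f x‖ * ‖g x‖ = 0) → ∀ y, ‖T f y‖ * ‖T g y‖ = 0)
    (hsep' : ∀ f g : X →ᵇ E, (∀ y, ‖T f y‖ * ‖T g y‖ = 0) → ∀ x, ‖f x‖ * ‖g x‖ = 0) :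
    ∀ y : Y, ∃! x : StoneCech X, IsSupportPoint T y x := by
  classical
  intro y
  have hT0 : T 0 = 0 := by
    have h := hadd 0 0
    rw [add_zero] at h
    exact add_eq_left.mp h.symm
  -- Existence
  have hex : ∃ x : StoneCech X, IsSupportPoint T y x := by
    by_contra hno
    push_neg at hno
    simp only [IsSupportPoint, not_forall, not_exists] at hno
    have hno' : ∀ x : StoneCech X, ∃ U : Set (StoneCech X), IsOpen U ∧ x ∈ U ∧
        ∀ f : X →ᵇ E, {x' : X | f x' ≠ 0} ⊆ stoneCechUnit ⁻¹' U → T f y = 0 := by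
      intro x
      obtain ⟨U, hUo, hxU, hU⟩ := hno x
      refine ⟨U, hUo, hxU, fun f hf => ?_⟩
      by_contra h
      exact hU f ⟨hf, h⟩
    choose U hUo hxU hU using hno'
    have hcov : (univ : Set (StoneCech X)) ⊆ ⋃ x, U x := fun x _ => mem_iUnion.2 ⟨x, hxU x⟩
    obtain ⟨t, ht⟩ := isCompact_univ.elim_finite_subcover U hUo hcov
    obtain ⟨ρ, hρ⟩ := PartitionOfUnity.exists_isSubordinate (s := (univ : Set (StoneCech X)))
      isClosed_univ (fun i : t => U i) (fun i => hUo i)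
      (by intro x _; obtain ⟨i, hi, hxi⟩ := mem_iUnion₂.1 (ht (mem_univ x)); exact
        mem_iUnion.2 ⟨⟨i, hi⟩, hxi⟩)
    obtain ⟨v, hv⟩ := exists_ne (0 : F)
    obtain ⟨f, hf⟩ := hbij.surjective (BoundedContinuousFunction.const Y v)
    have hfy : T f y ≠ 0 := by rw [hf]; simpa using hv
    have hdecomp : f = ∑ i ∈ (Finset.univ : Finset t), bcfSmul (ρ i) f := by
      ext x
      rw [BoundedContinuousFunction.coe_sum]
      simp only [Finset.sum_apply, bcfSmul_apply]
      rw [← Finset.sum_smul]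
      have h1 : ∑ᶠ i, ρ i (stoneCechUnit x) = 1 := ρ.sum_eq_one (mem_univ _)
      rw [finsum_eq_sum_of_fintype] at h1
      rw [h1, one_smul]
    have hzero : T f y = 0 := by
      rw [hdecomp, addHom_finset_sum T hadd, BoundedContinuousFunction.coe_sum, Finset.sum_apply]
      refine Finset.sum_eq_zero fun i _ => ?_
      refine hU i (bcfSmul (ρ i) f) ?_
      intro x hx
      simp only [mem_setOf_eq, bcfSmul_apply] at hx
      have hρx : ρ i (stoneCechUnit x) ≠ 0 := by
        intro h0; apply hx; rw [h0, zero_smul]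
      exact (hρ i) (subset_tsupport _ hρx)
    exact hfy hzero
  -- Uniqueness
  obtain ⟨x₀, hx₀⟩ := hex
  refine ⟨x₀, hx₀, fun x hx => ?_⟩
  by_contra hne
  obtain ⟨V, W, hVo, hWo, hxV, hx₀W, hVW⟩ := t2_separation hne
  obtain ⟨f, hfsub, hfy⟩ := hx V hVo hxV
  obtain ⟨g, hgsub, hgy⟩ := hx₀ W hWo hx₀W
  have hdisj : ∀ z, ‖f z‖ * ‖g z‖ = 0 := by
    intro z
    by_contra h
    have hfz : f z ≠ 0 := fun h0 => h (by simp [h0])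
    have hgz : g z ≠ 0 := fun h0 => h (by simp [h0])
    exact hVW.ne_of_mem (hfsub hfz) (hgsub hgz) rfl
  have hy := hsep f g hdisj y
  rcases mul_eq_zero.1 hy with h | h
  · exact hfy (norm_eq_zero.1 h)
  · exact hgy (norm_eq_zero.1 h)
end

section
/- Let X and Y be Tychonoff (completely regular Hausdorff) spaces, E and F nontrivial real normed vector spaces, and T : C*(X,E) → C*(Y,F) a biseparating map. Let y ∈ Y and let x ∈ StoneCech X be a support point of y. If f ∈ C*(X,E) and there exists an open neighborhood U of x in StoneCech X such that f vanishes identically on ι_X⁻¹(U), then there exists an open neighborhood V of y in Y such that Tf vanishes identically on V. -/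
open scoped BoundedContinuousFunction

/-- For a biseparating `T : C*(X,E) → C*(Y,F)`, `y ∈ Y` and a support point
`x` of `y`: if `f` vanishes on `ι_X⁻¹(U)` for some open neighborhood `U` of `x`, then
`Tf` vanishes on a neighborhood of `y`. -/
theorem stmt_12 {X Y E F : Type*}
    [TopologicalSpace X] [T35Space X] [TopologicalSpace Y] [T35Space Y]
    [NormedAddCommGroup E] [NormedSpace ℝ E] [Nontrivial E]
    [NormedAddCommGroup F] [NormedSpace ℝ F] [Nontrivial F]
    (T : (X →ᵇ E) → (Y →ᵇ F))
    (hbij : Function.Bijective T)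
    (hadd : ∀ f g : X →ᵇ E, T (f + g) = T f + T g)
    (hsep : ∀ f g : X →ᵇ E, (∀ x, ‖f x‖ * ‖g x‖ = 0) → ∀ y, ‖T f y‖ * ‖T g y‖ = 0)
    (hsep' : ∀ f g : X →ᵇ E, (∀ y, ‖T f y‖ * ‖T g y‖ = 0) → ∀ x, ‖f x‖ * ‖g x‖ = 0)
    (y : Y) (x : StoneCech X) (hx : IsSupportPoint T y x)
    (f : X →ᵇ E)
    (hf : ∃ U : Set (StoneCech X), IsOpen U ∧ x ∈ U ∧ ∀ x' ∈ stoneCechUnit ⁻¹' U, f x' = 0) :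
    ∃ V : Set Y, IsOpen V ∧ y ∈ V ∧ ∀ y' ∈ V, T f y' = 0 := by
  obtain ⟨U, hU, hxU, hfU⟩ := hf
  obtain ⟨g, hg, hgy⟩ := hx U hU hxU
  have hdisj : ∀ x', ‖f x'‖ * ‖g x'‖ = 0 := by
    intro x'
    by_cases h : g x' = 0
    · simp [h]
    · rw [hfU x' (hg h)]; simp
  have hsepy := hsep f g hdisj
  refine ⟨{y' | T g y' ≠ 0}, ?_, hgy, ?_⟩
  · exact isOpen_ne.preimage (T g).continuous
  · intro y' hy'
    rcases mul_eq_zero.mp (hsepy y') with h | h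
    · exact norm_eq_zero.mp h
    · exact absurd (norm_eq_zero.mp h) hy'
end

section
/- Let X and Y be Tychonoff (completely regular Hausdorff) spaces, E and F nontrivial real normed vector spaces, and T : C*(X,E) → C*(Y,F) a biseparating map. Let y ∈ Y and let x ∈ StoneCech X be a support point of y. If f ∈ C*(X,E) satisfies (Tf)(y) ≠ 0, then x belongs to the closure in StoneCech X of ι_X(c(f)), where c(f) = {x' ∈ X : f(x') ≠ 0}. -/
open scoped BoundedContinuousFunction

/-- For a biseparating `T : C*(X,E) → C*(Y,F)`, `y ∈ Y` and a support point
`x` of `y`: if `(Tf)(y) ≠ 0` then `x` lies in the closure in `StoneCech X` of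
`ι_X(c(f))`. -/
theorem stmt_13 {X Y E F : Type*}
    [TopologicalSpace X] [T35Space X] [TopologicalSpace Y] [T35Space Y]
    [NormedAddCommGroup E] [NormedSpace ℝ E] [Nontrivial E]
    [NormedAddCommGroup F] [NormedSpace ℝ F] [Nontrivial F]
    (T : (X →ᵇ E) → (Y →ᵇ F))
    (hbij : Function.Bijective T)
    (hadd : ∀ f g : X →ᵇ E, T (f + g) = T f + T g)
    (hsep : ∀ f g : X →ᵇ E, (∀ x, ‖f x‖ * ‖g x‖ = 0) → ∀ y, ‖T f y‖ * ‖T g y‖ = 0)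
    (hsep' : ∀ f g : X →ᵇ E, (∀ y, ‖T f y‖ * ‖T g y‖ = 0) → ∀ x, ‖f x‖ * ‖g x‖ = 0)
    (y : Y) (x : StoneCech X) (hx : IsSupportPoint T y x)
    (f : X →ᵇ E) (hf : T f y ≠ 0) :
    x ∈ closure (stoneCechUnit '' {x' : X | f x' ≠ 0}) := by
  by_contra h
  obtain ⟨g, hg, hgy⟩ := hx (closure (stoneCechUnit '' {x' : X | f x' ≠ 0}))ᶜ
    isClosed_closure.isOpen_compl h
  have hfg : ∀ x', ‖f x'‖ * ‖g x'‖ = 0 := by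
    intro x'
    by_cases hgx : g x' = 0
    · simp [hgx]
    · have : stoneCechUnit x' ∈ (closure (stoneCechUnit '' {x' : X | f x' ≠ 0}))ᶜ := hg hgx
      have hfx : f x' = 0 := by
        by_contra hfx
        exact this (subset_closure ⟨x', hfx, rfl⟩)
      simp [hfx]
  have := hsep f g hfg y
  rcases mul_eq_zero.1 this with h1 | h1
  · exact hf (norm_eq_zero.1 h1)
  · exact hgy (norm_eq_zero.1 h1)
end

section
/- Let X and Y be Tychonoff (completely regular Hausdorff) spaces, E and F nontrivial real normed vector spaces, and T : C*(X,E) → C*(Y,F) a biseparating map. Then there exists a continuous map h : Y → StoneCech X with dense range such that, for every y ∈ Y, h(y) is a support point of y. -/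
open scoped BoundedContinuousFunction
open Set

section aux

variable {X Y E F : Type*} [TopologicalSpace X] [TopologicalSpace Y]
    [NormedAddCommGroup E] [NormedAddCommGroup F]

private lemma aux_map_sum {A B : Type*} [AddCommMonoid A] [AddCommGroup B]
    (T : A → B) (hadd : ∀ f g, T (f + g) = T f + T g)
    {α : Type*} (s : Finset α) (g : α → A) :
    T (∑ i ∈ s, g i) = ∑ i ∈ s, T (g i) := by
  have h0 : T 0 = 0 := by
    have h := hadd 0 0
    rw [add_zero] at h
    have h' : T 0 + 0 = T 0 + T 0 := by rw [add_zero]; exact h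
    exact (add_left_cancel h').symm
  classical
  induction s using Finset.induction with
  | empty => simpa using h0
  | insert _ _ hnot ih =>
    rw [Finset.sum_insert hnot, hadd, ih, Finset.sum_insert hnot]

private lemma aux_T_zero (T : (X →ᵇ E) → (Y →ᵇ F))
    (hadd : ∀ f g : X →ᵇ E, T (f + g) = T f + T g) : T 0 = 0 := by
  have h := hadd 0 0
  rw [add_zero] at h
  have h' : T 0 + 0 = T 0 + T 0 := by rw [add_zero]; exact h
  exact (add_left_cancel h').symm

/-- Existence of a support point: uses additivity and surjectivity plus partitions of unity
on the compact space `StoneCech X`. -/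
private lemma aux_exists_support_point [NormedSpace ℝ E] [Nontrivial F]
    (T : (X →ᵇ E) → (Y →ᵇ F))
    (hsurj : Function.Surjective T)
    (hadd : ∀ f g : X →ᵇ E, T (f + g) = T f + T g)
    (y : Y) : ∃ x : StoneCech X, IsSupportPoint T y x := by
  classical
  by_contra hno
  push_neg at hno
  simp only [IsSupportPoint, not_forall, not_exists] at hno
  -- for each x, an open nbhd U x killing everything
  have hno' : ∀ x : StoneCech X, ∃ U : Set (StoneCech X), IsOpen U ∧ x ∈ U ∧
      ∀ f : X →ᵇ E, {x' : X | f x' ≠ 0} ⊆ stoneCechUnit ⁻¹' U → T f y = 0 := by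
    intro x
    obtain ⟨U, hUo, hxU, hU⟩ := hno x
    refine ⟨U, hUo, hxU, fun f hf => ?_⟩
    by_contra hne
    exact (hU f) ⟨hf, hne⟩
  choose U hUopen hUmem hU using hno'
  obtain ⟨t, ht⟩ := isCompact_univ.elim_finite_subcover U hUopen
    (fun z _ => mem_iUnion.2 ⟨z, hUmem z⟩)
  have hcov : (univ : Set (StoneCech X)) ⊆ ⋃ i : t, U i := by
    intro z hz
    rcases mem_iUnion₂.1 (ht hz) with ⟨i, hi, hzi⟩
    exact mem_iUnion.2 ⟨⟨i, hi⟩, hzi⟩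
  obtain ⟨p, hp⟩ := PartitionOfUnity.exists_isSubordinate (ι := t)
    isClosed_univ (fun i => U i) (fun i => hUopen i) hcov
  -- key: T f y = 0 for every f
  have key : ∀ f : X →ᵇ E, T f y = 0 := by
    intro f
    set g : t → (X →ᵇ E) := fun i =>
      BoundedContinuousFunction.ofNormedAddCommGroup
        (fun x => p i (stoneCechUnit x) • f x)
        (((p i).continuous.comp continuous_stoneCechUnit).smul f.continuous)
        ‖f‖
        (fun x => by
          rw [norm_smul, Real.norm_eq_abs, abs_of_nonneg (p.nonneg i _)]
          calc p i (stoneCechUnit x) * ‖f x‖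
              ≤ 1 * ‖f‖ :=
                mul_le_mul (p.le_one i _) (f.norm_coe_le_norm x) (norm_nonneg _)
                  zero_le_one
            _ = ‖f‖ := one_mul _) with hg
    have hsum : (∑ i : t, g i) = f := by
      ext x
      rw [BoundedContinuousFunction.sum_apply]
      have : ∀ i : t, g i x = p i (stoneCechUnit x) • f x := fun i => rfl
      simp only [this]
      rw [← Finset.sum_smul]
      have h1 : (∑ i : t, p i (stoneCechUnit x)) = 1 := by
        rw [← finsum_eq_sum_of_fintype]
        exact p.sum_eq_one (mem_univ _)
      rw [h1, one_smul]
    have hcoz : ∀ i : t, {x' : X | g i x' ≠ 0} ⊆ stoneCechUnit ⁻¹' (U i) := by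
      intro i x hx
      have hpi : stoneCechUnit x ∈ Function.support (p i) := by
        intro h
        exact hx (by show p i (stoneCechUnit x) • f x = 0; rw [h, zero_smul])
      exact hp i (subset_tsupport _ hpi)
    calc T f y = T (∑ i : t, g i) y := by rw [hsum]
      _ = (∑ i : t, T (g i)) y := by rw [aux_map_sum T hadd]
      _ = ∑ i : t, T (g i) y := by rw [BoundedContinuousFunction.sum_apply]
      _ = 0 := Finset.sum_eq_zero fun i _ => by rw [hU i (g i) (hcoz i)]
  obtain ⟨v, hv⟩ := exists_ne (0 : F)
  obtain ⟨f, hf⟩ := hsurj (BoundedContinuousFunction.const Y v)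
  have h0 := key f
  rw [hf] at h0
  exact hv h0

/-- A support point of `y` lies in the closure of the image of the cozero set of any `f`
with `T f y ≠ 0`. -/
private lemma aux_mem_closure
    (T : (X →ᵇ E) → (Y →ᵇ F))
    (hsep : ∀ f g : X →ᵇ E, (∀ x, ‖f x‖ * ‖g x‖ = 0) → ∀ y, ‖T f y‖ * ‖T g y‖ = 0)
    {y : Y} {x : StoneCech X} (hx : IsSupportPoint T y x)
    (f : X →ᵇ E) (hfy : T f y ≠ 0) :
    x ∈ closure (stoneCechUnit '' {x' : X | f x' ≠ 0}) := by
  by_contra hmem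
  obtain ⟨g, hg, hgy⟩ := hx (closure (stoneCechUnit '' {x' : X | f x' ≠ 0}))ᶜ
    isClosed_closure.isOpen_compl hmem
  have hdisj : ∀ x', ‖f x'‖ * ‖g x'‖ = 0 := by
    intro x'
    by_cases h : f x' = 0
    · rw [h, norm_zero, zero_mul]
    · have hmem' : stoneCechUnit x' ∈ closure (stoneCechUnit '' {x' : X | f x' ≠ 0}) :=
        subset_closure ⟨x', h, rfl⟩
      have hg0 : g x' = 0 := by
        by_contra hgne
        exact (hg hgne) hmem'
      rw [hg0, norm_zero, mul_zero]
  rcases mul_eq_zero.1 (hsep f g hdisj y) with h | h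
  · exact hfy (norm_eq_zero.1 h)
  · exact hgy (norm_eq_zero.1 h)

end aux

/-- For a biseparating `T : C*(X,E) → C*(Y,F)`, there is a continuous map
`h : Y → StoneCech X` with dense range sending each `y` to a support point of `y`. -/
theorem stmt_14 {X Y E F : Type*}
    [TopologicalSpace X] [T35Space X] [TopologicalSpace Y] [T35Space Y]
    [NormedAddCommGroup E] [NormedSpace ℝ E] [Nontrivial E]
    [NormedAddCommGroup F] [NormedSpace ℝ F] [Nontrivial F]
    (T : (X →ᵇ E) → (Y →ᵇ F))
    (hbij : Function.Bijective T)
    (hadd : ∀ f g : X →ᵇ E, T (f + g) = T f + T g)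
    (hsep : ∀ f g : X →ᵇ E, (∀ x, ‖f x‖ * ‖g x‖ = 0) → ∀ y, ‖T f y‖ * ‖T g y‖ = 0)
    (hsep' : ∀ f g : X →ᵇ E, (∀ y, ‖T f y‖ * ‖T g y‖ = 0) → ∀ x, ‖f x‖ * ‖g x‖ = 0) :
    ∃ h : Y → StoneCech X, Continuous h ∧ DenseRange h ∧ ∀ y : Y, IsSupportPoint T y (h y) := by
  classical
  have hex : ∀ y : Y, ∃ x : StoneCech X, IsSupportPoint T y x :=
    aux_exists_support_point T hbij.2 hadd
  set h : Y → StoneCech X := fun y => Classical.choose (hex y) with hh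
  have hsp : ∀ y : Y, IsSupportPoint T y (h y) := fun y => Classical.choose_spec (hex y)
  have hcont : Continuous h := by
    rw [continuous_iff_continuousAt]
    intro y
    intro U hU
    -- U ∈ 𝓝 (h y); find closed V ∈ 𝓝 (h y), V ⊆ U
    obtain ⟨V, hVn, hVc, hVU⟩ := exists_mem_nhds_isClosed_subset hU
    obtain ⟨f, hfcoz, hfy⟩ := hsp y (interior V) isOpen_interior (mem_interior_iff_mem_nhds.2 hVn)
    have hWopen : IsOpen {y' : Y | T f y' ≠ 0} := by
      have : IsClosed {y' : Y | T f y' = 0} :=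
        isClosed_singleton.preimage (T f).continuous
      simpa [Set.compl_setOf] using this.isOpen_compl
    rw [Filter.mem_map]
    refine Filter.mem_of_superset (hWopen.mem_nhds hfy) ?_
    intro y' hy'
    have hcl : h y' ∈ closure (stoneCechUnit '' {x' : X | f x' ≠ 0}) :=
      aux_mem_closure T hsep (hsp y') f hy'
    have : closure (stoneCechUnit '' {x' : X | f x' ≠ 0}) ⊆ V := by
      calc closure (stoneCechUnit '' {x' : X | f x' ≠ 0})
          ⊆ closure (interior V) := closure_mono (by
            rw [Set.image_subset_iff]; exact hfcoz)
        _ ⊆ V := hVc.closure_subset_iff.2 interior_subset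
    exact hVU (this hcl)
  refine ⟨h, hcont, ?_, hsp⟩
  -- dense range
  rw [denseRange_iff_closure_range]
  by_contra hnd
  obtain ⟨z, hz⟩ : ∃ z : StoneCech X, z ∉ closure (Set.range h) := by
    by_contra hall
    push_neg at hall
    exact hnd (Set.eq_univ_of_forall hall)
  have hO : (closure (Set.range h))ᶜ ∈ nhds z :=
    isClosed_closure.isOpen_compl.mem_nhds hz
  obtain ⟨V, hVn, hVc, hVO⟩ := exists_mem_nhds_isClosed_subset hO
  have hWopen : IsOpen (interior V) := isOpen_interior
  have hWne : (interior V).Nonempty := ⟨z, mem_interior_iff_mem_nhds.2 hVn⟩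
  obtain ⟨x0, hx0⟩ := denseRange_stoneCechUnit.exists_mem_open hWopen hWne
  -- bump function at x0 supported in stoneCechUnit ⁻¹' (interior V)
  obtain ⟨e, he⟩ := exists_ne (0 : E)
  have hK : IsClosed ((stoneCechUnit ⁻¹' interior V : Set X)ᶜ) :=
    (isOpen_interior.preimage continuous_stoneCechUnit).isClosed_compl
  have hx0K : x0 ∉ (stoneCechUnit ⁻¹' interior V : Set X)ᶜ := fun hmem => hmem hx0
  obtain ⟨q, hqc, hq0, hq1⟩ := CompletelyRegularSpace.completely_regular x0 _ hK hx0K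
  set f : X →ᵇ E := BoundedContinuousFunction.ofNormedAddCommGroup
    (fun x => (1 - (q x : ℝ)) • e)
    (((continuous_const.sub (continuous_subtype_val.comp hqc))).smul continuous_const)
    ‖e‖
    (fun x => by
      rw [norm_smul, Real.norm_eq_abs]
      have h0 : (0 : ℝ) ≤ 1 - (q x : ℝ) := by
        have := (q x).2.2
        linarith
      have h1 : (1 : ℝ) - (q x : ℝ) ≤ 1 := by
        have := (q x).2.1
        linarith
      rw [abs_of_nonneg h0]
      calc (1 - (q x : ℝ)) * ‖e‖ ≤ 1 * ‖e‖ :=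
            mul_le_mul_of_nonneg_right h1 (norm_nonneg _)
        _ = ‖e‖ := one_mul _) with hf
  have hfx0 : f x0 = e := by
    show (1 - (q x0 : ℝ)) • e = e
    rw [hq0]
    norm_num
  have hfne : f ≠ 0 := fun h => he (by rw [← hfx0, h]; rfl)
  have hTfne : T f ≠ 0 := by
    intro h
    exact hfne (hbij.1 (by rw [h, aux_T_zero T hadd]))
  obtain ⟨y, hy⟩ : ∃ y : Y, T f y ≠ 0 := by
    by_contra hall
    push_neg at hall
    exact hTfne (BoundedContinuousFunction.ext fun y => by
      simpa using hall y)
  have hcoz : {x' : X | f x' ≠ 0} ⊆ stoneCechUnit ⁻¹' interior V := by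
    intro x hx
    by_contra hmem
    have : f x = 0 := by
      show (1 - (q x : ℝ)) • e = 0
      have : q x = 1 := hq1 hmem
      rw [this]
      norm_num
    exact hx this
  have hcl : h y ∈ closure (stoneCechUnit '' {x' : X | f x' ≠ 0}) :=
    aux_mem_closure T hsep (hsp y) f hy
  have hsubV : closure (stoneCechUnit '' {x' : X | f x' ≠ 0}) ⊆ V := by
    calc closure (stoneCechUnit '' {x' : X | f x' ≠ 0})
        ⊆ closure (interior V) := closure_mono (by
          rw [Set.image_subset_iff]; exact hcoz)
      _ ⊆ V := hVc.closure_subset_iff.2 interior_subset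
  have hmem1 : h y ∈ (closure (Set.range h))ᶜ := hVO (hsubV hcl)
  exact hmem1 (subset_closure (Set.mem_range_self y))
end

section
/- Let X and Y be Tychonoff (completely regular Hausdorff) spaces and let E and F be nontrivial real normed vector spaces, and let T : C(X,E) → C(Y,F) be a biseparating map. Then for every y ∈ Y, every support point of y in StoneCech X belongs to the realcompactification υX; that is, for every continuous function g : X → ℝ, the unique continuous extension to StoneCech X of the composition of g with the embedding ℝ ↪ OnePoint ℝ takes a value different from the point at infinity at each support point of y. -/
open OnePoint

open Function Set

noncomputable def tent (N : ℕ) (t : ℝ) : ℝ := max 0 (1 - |t - N|)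

lemma tent_continuous (N : ℕ) : Continuous (tent N) := by unfold tent; fun_prop

lemma tent_ne_zero {N : ℕ} {t : ℝ} (h : tent N t ≠ 0) : |t - N| < 1 := by
  by_contra h'
  push_neg at h'
  exact h (max_eq_left (by linarith))

lemma tent_eq_zero {N : ℕ} {t : ℝ} (h : 1 ≤ |t - N|) : tent N t = 0 :=
  max_eq_left (by linarith)

lemma tent_pair {K : ℕ} {t : ℝ} (h1 : (K:ℝ) ≤ t) (h2 : t ≤ (K:ℝ)+1) :
    tent K t + tent (K+1) t = 1 := by
  unfold tent
  push_cast
  rw [abs_of_nonneg (by linarith), abs_of_nonpos (by linarith),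
    max_eq_right (by linarith), max_eq_right (by linarith)]
  ring

lemma tent_far {k M M₀ : ℕ} {t : ℝ} (hM : M ≠ M₀) (h : tent (2*M₀+k) t ≠ 0) :
    tent (2*M+k) t = 0 := by
  have h1 := tent_ne_zero h
  apply tent_eq_zero
  have h2 : (2:ℝ) ≤ |(((2*M+k : ℕ)):ℝ) - ((2*M₀+k : ℕ):ℝ)| := by
    have : (1:ℝ) ≤ |(M:ℝ) - (M₀:ℝ)| := by
      have : 1 ≤ |(M:ℤ) - (M₀:ℤ)| := Int.one_le_abs (sub_ne_zero.2 (by exact_mod_cast hM))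
      exact_mod_cast (by exact_mod_cast this : (1:ℝ) ≤ |((M:ℤ):ℝ) - ((M₀:ℤ):ℝ)|)
    have e : ((2*M+k : ℕ):ℝ) - ((2*M₀+k : ℕ):ℝ) = 2*((M:ℝ) - (M₀:ℝ)) := by push_cast; ring
    rw [e, abs_mul, abs_two]
    linarith
  have h3 := abs_sub_abs_le_abs_sub (t - ((2*M₀+k:ℕ):ℝ)) (t - ((2*M+k:ℕ):ℝ))
  have h4 := abs_sub (t - ((2*M₀+k:ℕ):ℝ)) (t - ((2*M+k:ℕ):ℝ))
  -- |(2M+k) - (2M₀+k)| ≤ |t - (2M+k)| + |t - (2M₀+k)|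
  have h5 : |((2*M+k:ℕ):ℝ) - ((2*M₀+k:ℕ):ℝ)| ≤ |t - ((2*M+k:ℕ):ℝ)| + |t - ((2*M₀+k:ℕ):ℝ)| := by
    have := abs_sub_le (((2*M+k:ℕ):ℝ)) t (((2*M₀+k:ℕ):ℝ))
    calc |((2*M+k:ℕ):ℝ) - ((2*M₀+k:ℕ):ℝ)| ≤ |((2*M+k:ℕ):ℝ) - t| + |t - ((2*M₀+k:ℕ):ℝ)| := this
    _ = |t - ((2*M+k:ℕ):ℝ)| + |t - ((2*M₀+k:ℕ):ℝ)| := by rw [abs_sub_comm]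
  linarith

lemma tentSum_eq_single {k : ℕ} (c : ℕ → ℝ) {t : ℝ} (M₀ : ℕ) (h : tent (2*M₀+k) t ≠ 0) :
    ∑ᶠ M, c M * tent (2*M+k) t = c M₀ * tent (2*M₀+k) t := by
  refine finsum_eq_single _ M₀ fun M hM => ?_
  rw [tent_far hM h, mul_zero]

lemma tentSum_ne_zero_exists {k : ℕ} {c : ℕ → ℝ} {t : ℝ} (h : ∑ᶠ M, c M * tent (2*M+k) t ≠ 0) :
    ∃ M₀, tent (2*M₀+k) t ≠ 0 := by
  by_contra hc
  push_neg at hc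
  exact h (finsum_eq_zero_of_forall_eq_zero fun M => by rw [hc M, mul_zero])

lemma locallyFinite_tents {X : Type*} [TopologicalSpace X] (k : ℕ) (c : ℕ → ℝ)
    {gg : X → ℝ} (hg : Continuous gg) :
    LocallyFinite fun M : ℕ => Function.support fun x => c M * tent (2*M+k) (gg x) := by
  intro x₀
  refine ⟨gg ⁻¹' Metric.ball (gg x₀) 1,
    hg.continuousAt.preimage_mem_nhds (Metric.ball_mem_nhds _ one_pos), ?_⟩
  apply Set.Finite.subset (Set.finite_lt_nat ⌈gg x₀ + 2⌉₊)
  rintro M ⟨x, hx1, hx2⟩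
  have h1 : tent (2*M+k) (gg x) ≠ 0 := fun h => by simp [h] at hx1
  have h2 := tent_ne_zero h1
  have h3 : |gg x - gg x₀| < 1 := by
    have := hx2
    simpa [Real.dist_eq] using this
  have h4 : ((2*M+k:ℕ):ℝ) < gg x₀ + 2 := by
    have a1 := abs_lt.mp h2
    have a2 := abs_lt.mp h3
    linarith [a1.1, a1.2, a2.1, a2.2]
  have h5 : (M:ℝ) < gg x₀ + 2 := by
    have : (M:ℝ) ≤ ((2*M+k:ℕ):ℝ) := by push_cast; linarith [Nat.cast_nonneg (α := ℝ) M, Nat.cast_nonneg (α := ℝ) k]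
    linarith
  exact Nat.lt_ceil.mpr h5

lemma tent_outside {t : ℝ} {K N : ℕ} (hKt : (K:ℝ) ≤ t) (ht2 : t < (K:ℝ)+1)
    (hN : N ≠ K) (hN' : N ≠ K+1) : tent N t = 0 := by
  apply tent_eq_zero
  rcases lt_or_gt_of_ne hN with h | h
  · have : (N:ℝ) + 1 ≤ K := by exact_mod_cast Nat.succ_le_of_lt h
    rw [abs_of_nonneg (by linarith)]
    linarith
  · have : (K:ℝ) + 2 ≤ N := by exact_mod_cast (by omega : K+2 ≤ N)
    rw [abs_of_nonpos (by linarith)]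
    linarith

lemma tentSum_tiling {t : ℝ} (ht : 1 < t) :
    (∑ᶠ M, (1:ℝ) * tent (2*M+1) t) + (∑ᶠ M, (1:ℝ) * tent (2*M+2) t) = 1 := by
  set K := ⌊t⌋₊ with hKdef
  have ht0 : (0:ℝ) ≤ t := by linarith
  have hKt : (K:ℝ) ≤ t := Nat.floor_le ht0
  have ht2 : t < (K:ℝ)+1 := by exact_mod_cast Nat.lt_floor_add_one t
  have hK1 : 1 ≤ K := by
    have := Nat.le_floor (by exact_mod_cast ht.le : ((1:ℕ):ℝ) ≤ t)
    exact this
  have hsingle : ∀ (k a : ℕ), (∀ M, M ≠ a → tent (2*M+k) t = 0) →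
      ∑ᶠ M, (1:ℝ) * tent (2*M+k) t = tent (2*a+k) t := by
    intro k a h
    rw [finsum_eq_single _ a fun M hM => by rw [h M hM, mul_zero]]
    ring
  rcases Nat.even_or_odd K with ⟨a, ha⟩ | ⟨a, ha⟩
  · -- K = a + a even, K ≥ 2, K = 2(a-1)+2, K+1 = 2a+1
    have ha2 : K = 2*(a-1)+2 := by omega
    have h1 : ∑ᶠ M, (1:ℝ) * tent (2*M+1) t = tent (K+1) t := by
      have := hsingle 1 a (fun M hM => tent_outside hKt ht2 (by omega) (by omega))
      rw [this]; congr 1; omega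
    have h2 : ∑ᶠ M, (1:ℝ) * tent (2*M+2) t = tent K t := by
      have := hsingle 2 (a-1) (fun M hM => tent_outside hKt ht2 (by omega) (by omega))
      rw [this]; congr 1; omega
    rw [h1, h2, add_comm]
    exact tent_pair hKt ht2.le
  · -- K = 2a+1 odd, K+1 = 2a+2
    have h1 : ∑ᶠ M, (1:ℝ) * tent (2*M+1) t = tent K t := by
      have := hsingle 1 a (fun M hM => tent_outside hKt ht2 (by omega) (by omega))
      rw [this]; congr 1; omega
    have h2 : ∑ᶠ M, (1:ℝ) * tent (2*M+2) t = tent (K+1) t := by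
      have := hsingle 2 a (fun M hM => tent_outside hKt ht2 (by omega) (by omega))
      rw [this]; congr 1; omega
    rw [h1, h2]
    exact tent_pair hKt ht2.le

section AnnFun

variable {X E : Type*} [TopologicalSpace X] [NormedAddCommGroup E] [NormedSpace ℝ E]

/-- sum of tent-multiples of `f₁`, with coefficients `c`, over the annuli of parity class `k`. -/
noncomputable def annFun (g : C(X,ℝ)) (f₁ : C(X,E)) (k : ℕ) (c : ℕ → ℝ) : C(X,E) :=
  ⟨fun x' => (∑ᶠ M, c M * tent (2*M+k) |g x'|) • f₁ x', by
    refine Continuous.smul ?_ f₁.continuous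
    exact continuous_finsum (fun M => by
        exact (continuous_const.mul ((tent_continuous _).comp (g.continuous.abs))))
      (locallyFinite_tents k c (g.continuous.abs))⟩

@[simp] lemma annFun_apply (g : C(X,ℝ)) (f₁ : C(X,E)) (k : ℕ) (c : ℕ → ℝ) (x' : X) :
    annFun g f₁ k c x' = (∑ᶠ M, c M * tent (2*M+k) |g x'|) • f₁ x' := rfl

/-- single annulus piece. -/
noncomputable def annSingle (g : C(X,ℝ)) (f₁ : C(X,E)) (k M : ℕ) : C(X,E) :=
  ⟨fun x' => tent (2*M+k) |g x'| • f₁ x',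
    (((tent_continuous _).comp (g.continuous.abs))).smul f₁.continuous⟩

@[simp] lemma annSingle_apply (g : C(X,ℝ)) (f₁ : C(X,E)) (k M : ℕ) (x' : X) :
    annSingle g f₁ k M x' = tent (2*M+k) |g x'| • f₁ x' := rfl

lemma annFun_eq_on_single (g : C(X,ℝ)) (f₁ : C(X,E)) (k : ℕ) (c : ℕ → ℝ) {M₀ : ℕ} {x' : X}
    (h : tent (2*M₀+k) |g x'| ≠ 0) :
    annFun g f₁ k c x' = c M₀ • annSingle g f₁ k M₀ x' := by
  rw [annFun_apply, annSingle_apply, tentSum_eq_single c M₀ h, mul_smul]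

end AnnFun

/-- `x ∈ StoneCech X` is a support point of `y ∈ Y` (relative to a map
`T : C(X,E) → C(Y,F)`) if for every open neighborhood `U` of `x` in `StoneCech X` there is
`f ∈ C(X,E)` with cozero set contained in `ι_X⁻¹(U)` and `(Tf)(y) ≠ 0`. -/
def IsSupportPointC {X Y E F : Type*} [TopologicalSpace X] [TopologicalSpace Y]
    [TopologicalSpace E] [TopologicalSpace F] [Zero E] [Zero F]
    (T : C(X, E) → C(Y, F)) (y : Y) (x : StoneCech X) : Prop :=
  ∀ U : Set (StoneCech X), IsOpen U → x ∈ U →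
    ∃ f : C(X, E), {x' : X | f x' ≠ 0} ⊆ stoneCechUnit ⁻¹' U ∧ T f y ≠ 0

/-- For a biseparating `T : C(X,E) → C(Y,F)` with `E`, `F` nontrivial, every
support point of every `y ∈ Y` belongs to the realcompactification `υX ⊆ StoneCech X`. -/
theorem stmt_17 {X Y E F : Type*}
    [TopologicalSpace X] [T35Space X] [TopologicalSpace Y] [T35Space Y]
    [NormedAddCommGroup E] [NormedSpace ℝ E] [Nontrivial E]
    [NormedAddCommGroup F] [NormedSpace ℝ F] [Nontrivial F]
    (T : C(X, E) → C(Y, F))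
    (hbij : Function.Bijective T)
    (hadd : ∀ f g : C(X, E), T (f + g) = T f + T g)
    (hsep : ∀ f g : C(X, E), (∀ x, ‖f x‖ * ‖g x‖ = 0) → ∀ y, ‖T f y‖ * ‖T g y‖ = 0)
    (hsep' : ∀ f g : C(X, E), (∀ y, ‖T f y‖ * ‖T g y‖ = 0) → ∀ x, ‖f x‖ * ‖g x‖ = 0) :
    ∀ (y : Y) (x : StoneCech X), IsSupportPointC T y x →
      ∀ g : C(X, ℝ),
        stoneCechExtend (OnePoint.continuous_coe.comp g.continuous) x ≠ (∞ : OnePoint ℝ) := by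
  intro y x hsupp g hginf
  have hcomm : ∀ x' : X,
      stoneCechExtend (OnePoint.continuous_coe.comp g.continuous) (stoneCechUnit x')
        = ((g x' : ℝ) : OnePoint ℝ) :=
    fun x' => congrFun (stoneCechExtend_extends _) x'
  -- support functions concentrated where |g| > m
  have getf : ∀ m : ℝ, ∃ f : C(X,E), (∀ x', f x' ≠ 0 → m < |g x'|) ∧ T f y ≠ 0 := by
    intro m
    have hSopen : IsOpen ((((↑) : ℝ → OnePoint ℝ) '' Metric.closedBall 0 m)ᶜ) :=
      OnePoint.isOpen_compl_image_coe.2 ⟨Metric.isClosed_closedBall, isCompact_closedBall 0 m⟩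
    obtain ⟨f, hf1, hf2⟩ := hsupp
      (stoneCechExtend (OnePoint.continuous_coe.comp g.continuous) ⁻¹'
        ((((↑) : ℝ → OnePoint ℝ) '' Metric.closedBall 0 m)ᶜ))
      (hSopen.preimage (continuous_stoneCechExtend _))
      (by
        rw [Set.mem_preimage, hginf]
        exact OnePoint.infty_notMem_image_coe)
    refine ⟨f, fun x' hx' => ?_, hf2⟩
    have h1 := hf1 hx'
    rw [Set.mem_preimage, Set.mem_preimage, hcomm x', Set.mem_compl_iff] at h1
    have h2 : g x' ∉ Metric.closedBall (0:ℝ) m := fun hc => h1 ⟨g x', hc, rfl⟩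
    by_contra hgt
    push_neg at hgt
    exact h2 (by rw [Metric.mem_closedBall, Real.dist_eq, sub_zero]; exact hgt)
  have hT0 : T 0 = 0 := by
    have h := hadd 0 0
    rw [add_zero] at h
    exact (left_eq_add.mp h)
  have hTn : ∀ (n : ℕ) (f : C(X,E)), T (n • f) = n • T f := by
    intro n f
    induction n with
    | zero => simp [hT0]
    | succ n ih => rw [succ_nsmul, hadd, ih, succ_nsmul]
  obtain ⟨f₁, hf₁supp, hf₁y⟩ := getf 1
  have hunbdd : ∀ u : C(X,E), T u y ≠ 0 → ∀ m : ℝ, ∃ x', u x' ≠ 0 ∧ m < |g x'| := by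
    intro u hu m
    by_contra hc
    push_neg at hc
    obtain ⟨f, hfs, hfy⟩ := getf m
    have hdisj : ∀ x', ‖u x'‖ * ‖f x'‖ = 0 := by
      intro x'
      rcases eq_or_ne (u x') 0 with h0 | h0
      · rw [h0, norm_zero, zero_mul]
      · rcases eq_or_ne (f x') 0 with h1 | h1
        · rw [h1, norm_zero, mul_zero]
        · exact absurd (hfs x' h1) (not_lt.mpr (hc x' h0))
    have h3 := hsep u f hdisj y
    rcases mul_eq_zero.mp h3 with h | h
    · exact hu (norm_eq_zero.mp h)
    · exact hfy (norm_eq_zero.mp h)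
  -- core argument, for a parity class k with nonzero value at y
  have core : ∀ k : ℕ, 1 ≤ k → T (annFun g f₁ k fun _ => 1) y ≠ 0 → False := by
    intro k hk hne
    set hp : C(X,E) := annFun g f₁ k fun _ => 1 with hhp
    set hst : C(X,E) := annFun g f₁ k (fun M => ((2*M+k : ℕ) : ℝ)) with hhst
    set ϑ := T hp y with hϑ
    set zs := T hst y with hzs
    have hids : ∀ (M₀ : ℕ) (y' : Y), T (annSingle g f₁ k M₀) y' ≠ 0 →
        T hp y' = T (annSingle g f₁ k M₀) y' ∧
        T hst y' = (2*M₀+k : ℕ) • T (annSingle g f₁ k M₀) y' := by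
      intro M₀ y' hy'
      have hcoz : ∀ x', annSingle g f₁ k M₀ x' ≠ 0 → tent (2*M₀+k) |g x'| ≠ 0 := by
        intro x' h ht
        rw [annSingle_apply, ht, zero_smul] at h
        exact h rfl
      constructor
      · set r : C(X,E) := hp - annSingle g f₁ k M₀ with hr
        have hdisj : ∀ x', ‖annSingle g f₁ k M₀ x'‖ * ‖r x'‖ = 0 := by
          intro x'
          rcases eq_or_ne (annSingle g f₁ k M₀ x') 0 with h0 | h0
          · rw [h0, norm_zero, zero_mul]
          · have ht := hcoz x' h0
            have hrx : r x' = 0 := by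
              rw [hr, ContinuousMap.sub_apply, hhp, annFun_eq_on_single g f₁ k _ ht]
              simp
            rw [hrx, norm_zero, mul_zero]
        have hTr := hsep _ _ hdisj y'
        have hTr0 : T r y' = 0 := by
          rcases mul_eq_zero.mp hTr with h | h
          · exact absurd (norm_eq_zero.mp h) hy'
          · exact norm_eq_zero.mp h
        have hsum : T hp y' = T (annSingle g f₁ k M₀) y' + T r y' := by
          have h5 : annSingle g f₁ k M₀ + r = hp := by rw [hr]; abel
          rw [← h5, hadd, ContinuousMap.add_apply]
        rw [hsum, hTr0, add_zero]
      · set es : C(X,E) := (2*M₀+k : ℕ) • annSingle g f₁ k M₀ with hes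
        have hTes : T es y' = (2*M₀+k : ℕ) • T (annSingle g f₁ k M₀) y' := by
          rw [hes, hTn]
          rfl
        have hTes0 : T es y' ≠ 0 := by
          rw [hTes]
          intro h
          rw [← Nat.cast_smul_eq_nsmul ℝ] at h
          rcases smul_eq_zero.mp h with h' | h'
          · have : (2*M₀+k : ℕ) ≠ 0 := by omega
            exact this (by exact_mod_cast h')
          · exact hy' h'
        set r : C(X,E) := hst - es with hr
        have hdisj : ∀ x', ‖es x'‖ * ‖r x'‖ = 0 := by
          intro x'
          rcases eq_or_ne (annSingle g f₁ k M₀ x') 0 with h0 | h0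
          · have hesx : es x' = 0 := by rw [hes]; simp [h0]
            rw [hesx, norm_zero, zero_mul]
          · have ht := hcoz x' h0
            have hrx : r x' = 0 := by
              rw [hr, ContinuousMap.sub_apply, hhst, annFun_eq_on_single g f₁ k _ ht, hes]
              rw [ContinuousMap.smul_apply, ← Nat.cast_smul_eq_nsmul ℝ]
              exact sub_self _
            rw [hrx, norm_zero, mul_zero]
        have hTr := hsep _ _ hdisj y'
        have hTr0 : T r y' = 0 := by
          rcases mul_eq_zero.mp hTr with h | h
          · exact absurd (norm_eq_zero.mp h) hTes0
          · exact norm_eq_zero.mp h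
        have hsum : T hst y' = T es y' + T r y' := by
          have h5 : es + r = hst := by rw [hr]; abel
          rw [← h5, hadd, ContinuousMap.add_apply]
        rw [hsum, hTr0, add_zero, hTes]
    have hϑpos : 0 < ‖ϑ‖ := norm_pos_iff.mpr hne
    set V : Set Y := {y' | ‖T hp y' - ϑ‖ < ‖ϑ‖/2} ∩ {y' | ‖T hst y' - zs‖ < 1} with hV
    have hVopen : IsOpen V := by
      apply IsOpen.inter
      · exact isOpen_lt (((T hp).continuous.sub continuous_const).norm) continuous_const
      · exact isOpen_lt (((T hst).continuous.sub continuous_const).norm) continuous_const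
    have hyV : y ∈ V := by
      constructor
      · show ‖T hp y - ϑ‖ < ‖ϑ‖/2
        rw [← hϑ, sub_self, norm_zero]
        linarith
      · show ‖T hst y - zs‖ < 1
        rw [← hzs, sub_self, norm_zero]
        norm_num
    obtain ⟨ψ, hψc, hψy, hψK⟩ := CompletelyRegularSpace.completely_regular y Vᶜ
      hVopen.isClosed_compl (by simpa using hyV)
    obtain ⟨w₀, hw₀⟩ := exists_ne (0 : F)
    set w : C(Y,F) := ⟨fun y' => (1 - (ψ y' : ℝ)) • w₀,
      (continuous_const.sub (continuous_subtype_val.comp hψc)).smul continuous_const⟩ with hw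
    have hwy : w y = w₀ := by
      show (1 - (ψ y : ℝ)) • w₀ = w₀
      rw [hψy]
      norm_num
    have hwV : ∀ y', w y' ≠ 0 → y' ∈ V := by
      intro y' h
      by_contra hv
      apply h
      show (1 - (ψ y' : ℝ)) • w₀ = 0
      have : ψ y' = 1 := hψK hv
      rw [this]
      norm_num
    obtain ⟨u, hu⟩ := hbij.surjective w
    have huy : T u y ≠ 0 := by
      rw [hu, hwy]
      exact hw₀
    set m : ℝ := 2*(‖zs‖+1)/‖ϑ‖ + 2 with hm
    obtain ⟨xs, hxsu, hxsg⟩ := hunbdd u huy m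
    by_cases hcl : xs ∈ closure {x' | hp x' ≠ 0}
    · -- main case
      have hO : IsOpen {x' | u x' ≠ 0 ∧ m < |g x'|} := by
        have h1 : IsOpen {x' : X | u x' ≠ 0} := by
          have : {x' : X | u x' ≠ 0} = u ⁻¹' ({(0:E)}ᶜ) := rfl
          rw [this]
          exact isOpen_compl_singleton.preimage u.continuous
        have h2 : IsOpen {x' : X | m < |g x'|} := by
          have : {x' : X | m < |g x'|} = (fun x' => |g x'|) ⁻¹' (Set.Ioi m) := rfl
          rw [this]
          exact isOpen_Ioi.preimage (g.continuous.abs)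
        have h3 : {x' : X | u x' ≠ 0 ∧ m < |g x'|}
            = {x' : X | u x' ≠ 0} ∩ {x' : X | m < |g x'|} := rfl
        rw [h3]
        exact h1.inter h2
      obtain ⟨xss, hxssO, hxsshp⟩ := mem_closure_iff.mp hcl _ hO ⟨hxsu, hxsg⟩
      obtain ⟨hxssu, hxssg⟩ := hxssO
      have hxsshp' : hp xss ≠ 0 := hxsshp
      have hf₁xss : f₁ xss ≠ 0 := by
        intro h
        apply hxsshp'
        rw [hhp, annFun_apply, h, smul_zero]
      have hscal : (∑ᶠ M, (fun _ => (1:ℝ)) M * tent (2*M+k) |g xss|) ≠ 0 := by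
        intro h
        apply hxsshp'
        rw [hhp, annFun_apply, h, zero_smul]
      obtain ⟨M₀, htM₀⟩ := tentSum_ne_zero_exists hscal
      have heC : annSingle g f₁ k M₀ xss ≠ 0 := by
        rw [annSingle_apply]
        exact smul_ne_zero htM₀ hf₁xss
      have hex : ∃ y', ‖T (annSingle g f₁ k M₀) y'‖ * ‖T u y'‖ ≠ 0 := by
        by_contra hc
        push_neg at hc
        have h0 := hsep' _ _ hc xss
        rcases mul_eq_zero.mp h0 with h | h
        · exact heC (norm_eq_zero.mp h)
        · exact hxssu (norm_eq_zero.mp h)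
      obtain ⟨ys, hys⟩ := hex
      have hys1 : T (annSingle g f₁ k M₀) ys ≠ 0 := by
        intro h
        exact hys (by rw [h, norm_zero, zero_mul])
      have hys2 : T u ys ≠ 0 := by
        intro h
        exact hys (by rw [h, norm_zero, mul_zero])
      have hysV : ys ∈ V := hwV ys (by rw [← hu]; exact hys2)
      obtain ⟨hid1, hid2⟩ := hids M₀ ys hys1
      obtain ⟨hysa, hysb⟩ := hysV
      simp only [Set.mem_setOf_eq] at hysa hysb
      rw [hid1] at hysa
      rw [hid2] at hysb
      have hb1 : ‖ϑ‖/2 < ‖T (annSingle g f₁ k M₀) ys‖ := by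
        have h2 := abs_norm_sub_norm_le (T (annSingle g f₁ k M₀) ys) ϑ
        have h3 := abs_le.mp h2
        linarith [h3.1]
      have hnorm_ns : ‖(2*M₀+k : ℕ) • T (annSingle g f₁ k M₀) ys‖
          = ((2*M₀+k : ℕ):ℝ) * ‖T (annSingle g f₁ k M₀) ys‖ := by
        rw [← Nat.cast_smul_eq_nsmul ℝ, norm_smul, Real.norm_natCast]
      have hb2 : ((2*M₀+k : ℕ):ℝ) * ‖T (annSingle g f₁ k M₀) ys‖ < ‖zs‖ + 1 := by
        have h4 := norm_sub_norm_le ((2*M₀+k : ℕ) • T (annSingle g f₁ k M₀) ys) zs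
        rw [hnorm_ns] at h4
        linarith
      have hNbig : m - 1 < ((2*M₀+k : ℕ):ℝ) := by
        have h5 := abs_lt.mp (tent_ne_zero htM₀)
        linarith [h5.1, h5.2]
      have hN0 : (0:ℝ) ≤ ((2*M₀+k : ℕ):ℝ) := Nat.cast_nonneg _
      have h6 : ((2*M₀+k : ℕ):ℝ) * (‖ϑ‖/2) ≤ ((2*M₀+k : ℕ):ℝ) * ‖T (annSingle g f₁ k M₀) ys‖ :=
        mul_le_mul_of_nonneg_left hb1.le hN0
      have h7 : (m - 1) * (‖ϑ‖/2) < ((2*M₀+k : ℕ):ℝ) * (‖ϑ‖/2) :=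
        mul_lt_mul_of_pos_right hNbig (by linarith)
      have h8 : (m-1) * (‖ϑ‖/2) = (‖zs‖+1) + ‖ϑ‖/2 := by
        rw [hm]
        field_simp
        ring
      linarith
    · -- bump case
      obtain ⟨φ, hφc, hφxs, hφK⟩ := CompletelyRegularSpace.completely_regular xs
        (closure {x' | hp x' ≠ 0}) isClosed_closure hcl
      set e : C(X,E) := ⟨fun x' => (1 - (φ x' : ℝ)) • u x',
        (continuous_const.sub (continuous_subtype_val.comp hφc)).smul u.continuous⟩ with he
      have hdisj : ∀ x', ‖e x'‖ * ‖hp x'‖ = 0 := by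
        intro x'
        rcases eq_or_ne (hp x') 0 with h0 | h0
        · rw [h0, norm_zero, mul_zero]
        · have hmem : x' ∈ closure {x'' | hp x'' ≠ 0} := subset_closure h0
          have hex' : e x' = 0 := by
            show (1 - (φ x' : ℝ)) • u x' = 0
            have : φ x' = 1 := hφK hmem
            rw [this]
            norm_num
          rw [hex', norm_zero, zero_mul]
      have h2 := hsep _ _ hdisj
      have hexs : e xs ≠ 0 := by
        show (1 - (φ xs : ℝ)) • u xs ≠ 0
        rw [hφxs]
        simpa using hxsu
      have hex : ∃ y', ‖T e y'‖ * ‖T u y'‖ ≠ 0 := by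
        by_contra hc
        push_neg at hc
        have h0 := hsep' _ _ hc xs
        rcases mul_eq_zero.mp h0 with h | h
        · exact hexs (norm_eq_zero.mp h)
        · exact hxsu (norm_eq_zero.mp h)
      obtain ⟨ys, hys⟩ := hex
      have hyse : T e ys ≠ 0 := fun h => hys (by rw [h, norm_zero, zero_mul])
      have hysu : T u ys ≠ 0 := fun h => hys (by rw [h, norm_zero, mul_zero])
      have hysV : ys ∈ V := hwV ys (by rw [← hu]; exact hysu)
      have hhpys : T hp ys ≠ 0 := by
        obtain ⟨hysa, _⟩ := hysV
        simp only [Set.mem_setOf_eq] at hysa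
        intro h
        rw [h, zero_sub, norm_neg] at hysa
        linarith
      rcases mul_eq_zero.mp (h2 ys) with h | h
      · exact hyse (norm_eq_zero.mp h)
      · exact hhpys (norm_eq_zero.mp h)
  -- decomposition of f₁ into the two parity classes
  have hdecomp : f₁ = annFun g f₁ 1 (fun _ => 1) + annFun g f₁ 2 (fun _ => 1) := by
    ext x'
    show f₁ x' = (∑ᶠ M, (1:ℝ) * tent (2*M+1) |g x'|) • f₁ x'
      + (∑ᶠ M, (1:ℝ) * tent (2*M+2) |g x'|) • f₁ x'
    rw [← add_smul]
    rcases eq_or_ne (f₁ x') 0 with h | h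
    · rw [h, smul_zero]
    · rw [tentSum_tiling (hf₁supp x' h), one_smul]
  have hsumy : T f₁ y = T (annFun g f₁ 1 fun _ => 1) y + T (annFun g f₁ 2 fun _ => 1) y := by
    conv_lhs => rw [hdecomp]
    rw [hadd, ContinuousMap.add_apply]
  by_cases h1 : T (annFun g f₁ 1 fun _ => 1) y = 0
  · by_cases h2 : T (annFun g f₁ 2 fun _ => 1) y = 0
    · exact hf₁y (by rw [hsumy, h1, h2, add_zero])
    · exact core 2 (by norm_num) h2
  · exact core 1 le_rfl h1
end

section
/- Let n, m ≥ 1 be natural numbers, let p, q be natural numbers, let Ω be a nonempty bounded open subset of ℝ^p and Ω' a nonempty bounded open subset of ℝ^q, and let E and F be nontrivial real Banach spaces. Let C^n(Ω̄,E) denote the space of functions f : Ω → E that arise as restrictions to Ω of functions g : ℝ^p → E satisfying ContDiffOn ℝ n g Ω and such that, for every k ≤ n, the iterated derivative iteratedFDerivWithin ℝ k g Ω, restricted to Ω, extends to a continuous function on the closure of Ω; define C^m(Ω̄',F) analogously. If there exists a biseparating map T : C^n(Ω̄,E) → C^m(Ω̄',F), then the closures of Ω in ℝ^p and of Ω' in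 ℝ^q are homeomorphic. -/
/-- The space `C^n(Ω̄,E)` of functions `f : Ω → E` that are restrictions to `Ω` of functions
`g : ℝ^p → E` which are `n`-times continuously differentiable on `Ω` and whose iterated
derivatives up to order `n`, restricted to `Ω`, extend continuously to the closure of `Ω`. -/
def CnBarSpace (n p : ℕ) (Ω : Set (Fin p → ℝ)) (E : Type*)
    [NormedAddCommGroup E] [NormedSpace ℝ E] : Set (Ω → E) :=
  {f | ∃ g : (Fin p → ℝ) → E, ContDiffOn ℝ n g Ω ∧ (∀ x : Ω, f x = g x) ∧
    ∀ k : ℕ, k ≤ n →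
      ∃ G : closure Ω → ContinuousMultilinearMap ℝ (fun _ : Fin k => (Fin p → ℝ)) E,
        Continuous G ∧
          ∀ x : Ω, G ⟨x.1, subset_closure x.2⟩ = iteratedFDerivWithin ℝ k g Ω x.1}

theorem CnBarSpace.add_mem {n p : ℕ} {Ω : Set (Fin p → ℝ)} (hΩ : IsOpen Ω) {E : Type*}
    [NormedAddCommGroup E] [NormedSpace ℝ E] {f g : Ω → E}
    (hf : f ∈ CnBarSpace n p Ω E) (hg : g ∈ CnBarSpace n p Ω E) :
    f + g ∈ CnBarSpace n p Ω E := by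
  obtain ⟨a, ha, hfa, hexta⟩ := hf
  obtain ⟨b, hb, hgb, hextb⟩ := hg
  refine ⟨a + b, ha.add hb, fun x => by simp [Pi.add_apply, hfa x, hgb x], fun k hk => ?_⟩
  obtain ⟨Ga, hGa, hGa'⟩ := hexta k hk
  obtain ⟨Gb, hGb, hGb'⟩ := hextb k hk
  refine ⟨fun z => Ga z + Gb z, hGa.add hGb, fun x => ?_⟩
  have hk' : (k : WithTop ℕ∞) ≤ (n : WithTop ℕ∞) := by exact_mod_cast hk
  rw [iteratedFDerivWithin_add_apply ((ha.of_le hk') x.1 x.2) ((hb.of_le hk') x.1 x.2)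
    hΩ.uniqueDiffOn x.2]
  exact congrArg₂ (· + ·) (hGa' x) (hGb' x)

namespace Stmt18
open Set Metric Bornology

variable {p : ℕ} {Ω : Set (Fin p → ℝ)}

/-- Extension property for the `k`-th iterated derivative within `Ω`. -/
def ExtD (Ω : Set (Fin p → ℝ)) (k : ℕ) {G : Type*} [NormedAddCommGroup G]
    [NormedSpace ℝ G] (g : (Fin p → ℝ) → G) : Prop :=
  ∃ Gext : closure Ω → ContinuousMultilinearMap ℝ (fun _ : Fin k => (Fin p → ℝ)) G,
    Continuous Gext ∧ ∀ x : Ω, Gext ⟨x.1, subset_closure x.2⟩ = iteratedFDerivWithin ℝ k g Ω x.1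

/-- Extension property for the function itself. -/
def ExtFun (Ω : Set (Fin p → ℝ)) {G : Type*} [NormedAddCommGroup G]
    [NormedSpace ℝ G] (g : (Fin p → ℝ) → G) : Prop :=
  ∃ Gext : closure Ω → G, Continuous Gext ∧ ∀ x : Ω, Gext ⟨x.1, subset_closure x.2⟩ = g x

variable {G : Type*} [NormedAddCommGroup G] [NormedSpace ℝ G] {g g₁ g₂ : (Fin p → ℝ) → G}

theorem ExtFun.extD0 (h : ExtFun Ω g) : ExtD Ω 0 g := by
  obtain ⟨G0, hc, hG⟩ := h
  refine ⟨fun z => (continuousMultilinearCurryFin0 ℝ (Fin p → ℝ) G).symm (G0 z),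
    (LinearIsometryEquiv.continuous _).comp hc, fun x => ?_⟩
  dsimp only
  rw [iteratedFDerivWithin_zero_eq_comp, Function.comp_apply, hG]

theorem ExtD.extFun (h : ExtD Ω 0 g) : ExtFun Ω g := by
  obtain ⟨G0, hc, hG⟩ := h
  refine ⟨fun z => (continuousMultilinearCurryFin0 ℝ (Fin p → ℝ) G) (G0 z),
    (LinearIsometryEquiv.continuous _).comp hc, fun x => ?_⟩
  dsimp only
  rw [hG, iteratedFDerivWithin_zero_eq_comp]; rfl

theorem ExtD.congr (h : ExtD Ω k g₁) (he : EqOn g₂ g₁ Ω) : ExtD Ω k g₂ := by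
  obtain ⟨G0, hc, hG⟩ := h
  exact ⟨G0, hc, fun x => by rw [iteratedFDerivWithin_congr he x.2, hG]⟩

theorem ExtD.succ {k : ℕ} (hΩ : IsOpen Ω) (h : ExtD Ω k (fderivWithin ℝ g Ω)) :
    ExtD Ω (k + 1) g := by
  obtain ⟨G0, hc, hG⟩ := h
  refine ⟨fun z => (continuousMultilinearCurryRightEquiv' ℝ k (Fin p → ℝ) G).symm (G0 z),
    (LinearIsometryEquiv.continuous _).comp hc, fun x => ?_⟩
  dsimp only
  rw [iteratedFDerivWithin_succ_eq_comp_right hΩ.uniqueDiffOn x.2, Function.comp_apply, hG]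

theorem ExtD.of_succ {k : ℕ} (hΩ : IsOpen Ω) (h : ExtD Ω (k + 1) g) :
    ExtD Ω k (fderivWithin ℝ g Ω) := by
  obtain ⟨G0, hc, hG⟩ := h
  refine ⟨fun z => (continuousMultilinearCurryRightEquiv' ℝ k (Fin p → ℝ) G) (G0 z),
    (LinearIsometryEquiv.continuous _).comp hc, fun x => ?_⟩
  dsimp only
  rw [hG, iteratedFDerivWithin_succ_eq_comp_right hΩ.uniqueDiffOn x.2, Function.comp_apply,
    LinearIsometryEquiv.apply_symm_apply]

theorem ExtD.add {k : ℕ} (hΩ : IsOpen Ω) (h₁ : ContDiffOn ℝ k g₁ Ω) (h₂ : ContDiffOn ℝ k g₂ Ω)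
    (e₁ : ExtD Ω k g₁) (e₂ : ExtD Ω k g₂) : ExtD Ω k (g₁ + g₂) := by
  obtain ⟨G1, hc1, hG1⟩ := e₁
  obtain ⟨G2, hc2, hG2⟩ := e₂
  refine ⟨fun z => G1 z + G2 z, hc1.add hc2, fun x => ?_⟩
  dsimp only
  rw [iteratedFDerivWithin_add_apply (h₁ x.1 x.2) (h₂ x.1 x.2) hΩ.uniqueDiffOn x.2, hG1, hG2]


theorem extFun_bilinear {G₁ G₂ G₃ : Type*}
    [NormedAddCommGroup G₁] [NormedSpace ℝ G₁] [NormedAddCommGroup G₂] [NormedSpace ℝ G₂]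
    [NormedAddCommGroup G₃] [NormedSpace ℝ G₃]
    (B : G₁ →L[ℝ] G₂ →L[ℝ] G₃) {ψ : (Fin p → ℝ) → G₁} {g : (Fin p → ℝ) → G₂}
    (hψ : Continuous ψ) (hg : ExtFun Ω g) : ExtFun Ω (fun x => B (ψ x) (g x)) := by
  obtain ⟨Gext, hc, hG⟩ := hg
  refine ⟨fun z => B (ψ z.1) (Gext z), ?_, fun x => by dsimp only; rw [hG]⟩
  exact B.continuous₂.comp ((hψ.comp continuous_subtype_val).prodMk hc)

universe u₁ u₂ u₃

theorem extD_bilinear (hΩ : IsOpen Ω) : ∀ (N : ℕ) {G₁ : Type u₁} {G₂ : Type u₂} {G₃ : Type u₃}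
    [NormedAddCommGroup G₁] [NormedSpace ℝ G₁] [NormedAddCommGroup G₂] [NormedSpace ℝ G₂]
    [NormedAddCommGroup G₃] [NormedSpace ℝ G₃]
    (B : G₁ →L[ℝ] G₂ →L[ℝ] G₃) (ψ : (Fin p → ℝ) → G₁) (g : (Fin p → ℝ) → G₂),
    (∀ j : ℕ, ContDiff ℝ j ψ) → ContDiffOn ℝ N g Ω → (∀ k, k ≤ N → ExtD Ω k g) →
    ∀ k, k ≤ N → ExtD Ω k (fun x => B (ψ x) (g x)) := by
  intro N
  induction N with
  | zero =>
    intro G₁ G₂ G₃ _ _ _ _ _ _ B ψ g hψ hg hext k hk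
    interval_cases k
    exact (extFun_bilinear B (hψ 0).continuous (hext 0 le_rfl).extFun).extD0
  | succ N IH =>
    intro G₁ G₂ G₃ _ _ _ _ _ _ B ψ g hψ hg hext k hk
    match k with
    | 0 => exact (extFun_bilinear B (hψ 0).continuous (hext 0 (by omega)).extFun).extD0
    | (j+1) =>
      have hj : j ≤ N := by omega
      -- derivative of g
      have hg' : ContDiffOn ℝ N (fderivWithin ℝ g Ω) Ω := by
        apply hg.fderivWithin hΩ.uniqueDiffOn
        exact_mod_cast le_rfl
      have hext' : ∀ k, k ≤ N → ExtD Ω k (fderivWithin ℝ g Ω) :=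
        fun k hk => ExtD.of_succ hΩ (hext (k+1) (by omega))
      have hgN : ContDiffOn ℝ N g Ω := hg.of_le (by exact_mod_cast Nat.le_succ N)
      have hextN : ∀ k, k ≤ N → ExtD Ω k g := fun k hk => hext k (by omega)
      have hψ' : ∀ j : ℕ, ContDiff ℝ j (fderiv ℝ ψ) := fun j =>
        (hψ (j+1)).fderiv_right (by exact_mod_cast le_rfl)
      -- the two terms
      set t1 : (Fin p → ℝ) → (Fin p → ℝ) →L[ℝ] G₃ :=
        fun x => (B.precompR (Fin p → ℝ)) (ψ x) (fderivWithin ℝ g Ω x) with ht1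
      set t2 : (Fin p → ℝ) → (Fin p → ℝ) →L[ℝ] G₃ :=
        fun x => (B.precompL (Fin p → ℝ)) (fderiv ℝ ψ x) (g x) with ht2
      have e1 : ExtD Ω j t1 := IH (B.precompR (Fin p → ℝ)) ψ _ hψ hg' hext' j hj
      have e2 : ExtD Ω j t2 := IH (B.precompL (Fin p → ℝ)) (fderiv ℝ ψ) g hψ' hgN hextN j hj
      have c1 : ContDiffOn ℝ j t1 Ω := by
        have hM : ContDiff ℝ (j : ℕ) (fun u : G₁ => (B.precompR (Fin p → ℝ)) u) :=
          contDiff_const.clm_apply contDiff_id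
        have h1 : ContDiffOn ℝ j (fun x => (B.precompR (Fin p → ℝ)) (ψ x)) Ω :=
          hM.comp_contDiffOn (hψ j).contDiffOn
        exact h1.clm_apply (hg'.of_le (by exact_mod_cast hj))
      have c2 : ContDiffOn ℝ j t2 Ω := by
        have hM : ContDiff ℝ (j : ℕ) (fun u : (Fin p → ℝ) →L[ℝ] G₁ => (B.precompL (Fin p → ℝ)) u) :=
          contDiff_const.clm_apply contDiff_id
        have h1 : ContDiffOn ℝ j (fun x => (B.precompL (Fin p → ℝ)) (fderiv ℝ ψ x)) Ω :=
          hM.comp_contDiffOn (hψ' j).contDiffOn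
        exact h1.clm_apply (hgN.of_le (by exact_mod_cast hj))
      have heq : EqOn (fderivWithin ℝ (fun x => B (ψ x) (g x)) Ω) (t1 + t2) Ω := by
        intro x hx
        have hdψ : DifferentiableWithinAt ℝ ψ Ω x := ((hψ 1).differentiable
          (by simp)).differentiableAt.differentiableWithinAt
        have hdg : DifferentiableWithinAt ℝ g Ω x := hg.differentiableOn
          (by simp) x hx
        rw [B.fderivWithin_of_bilinear hdψ hdg (hΩ.uniqueDiffOn x hx),
          show fderivWithin ℝ ψ Ω x = fderiv ℝ ψ x from fderivWithin_of_isOpen hΩ hx]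
        rfl
      exact ExtD.succ hΩ (((e1.add hΩ c1 c2 e2 :)).congr heq)

variable {n : ℕ} {E : Type*} [NormedAddCommGroup E] [NormedSpace ℝ E]

theorem mem_of_contDiff (hΩ : IsOpen Ω) {g : (Fin p → ℝ) → E} (hg : ∀ j : ℕ, ContDiff ℝ j g) :
    (fun x : Ω => g x.1) ∈ CnBarSpace n p Ω E := by
  refine ⟨g, (hg n).contDiffOn, fun x => rfl, fun k hk => ?_⟩
  have hck : Continuous (iteratedFDeriv ℝ k g) :=
    ContDiff.continuous_iteratedFDeriv (n := ((k : ℕ) : WithTop ℕ∞)) (by exact_mod_cast le_rfl) (hg k)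
  exact ⟨fun z => iteratedFDeriv ℝ k g z.1, hck.comp continuous_subtype_val,
    fun x => (iteratedFDerivWithin_of_isOpen (𝕜 := ℝ) (f := g) k hΩ x.2).symm⟩

theorem const_mem (hΩ : IsOpen Ω) (v : E) : (fun _ : Ω => v) ∈ CnBarSpace n p Ω E :=
  mem_of_contDiff hΩ (fun _ => contDiff_const)

theorem smul_mem (hΩ : IsOpen Ω) {φ : (Fin p → ℝ) → ℝ} (hφ : ∀ j : ℕ, ContDiff ℝ j φ)
    {f : Ω → E} (hf : f ∈ CnBarSpace n p Ω E) :
    (fun x : Ω => φ x.1 • f x) ∈ CnBarSpace n p Ω E := by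
  obtain ⟨g, hg, hfg, hext⟩ := hf
  refine ⟨fun t => φ t • g t, (hφ n).contDiffOn.smul hg, fun x => by dsimp only; rw [hfg x], fun k hk => ?_⟩
  exact extD_bilinear hΩ n (ContinuousLinearMap.lsmul ℝ ℝ) φ g hφ hg (fun k hk => hext k hk) k hk

theorem neg_mem (hΩ : IsOpen Ω) {f : Ω → E} (hf : f ∈ CnBarSpace n p Ω E) :
    (-f) ∈ CnBarSpace n p Ω E := by
  have h := smul_mem hΩ (fun j => contDiff_const (c := (-1 : ℝ))) hf
  have : (-f) = fun x : Ω => (-1 : ℝ) • f x := by funext x; simp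
  rwa [this]

theorem denseRange_inclusion : DenseRange (fun x : Ω => (⟨x.1, subset_closure x.2⟩ : closure Ω)) := by
  intro z
  rw [closure_subtype]
  have : Subtype.val '' (range fun x : Ω => (⟨x.1, subset_closure x.2⟩ : closure Ω)) = Ω := by
    ext t
    constructor
    · rintro ⟨w, ⟨x, rfl⟩, rfl⟩; exact x.2
    · intro ht; exact ⟨⟨t, subset_closure ht⟩, ⟨⟨t, ht⟩, rfl⟩, rfl⟩
  rw [this]
  exact z.2

theorem ext_unique {G₁ G₂ : closure Ω → E} (h₁ : Continuous G₁) (h₂ : Continuous G₂)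
    (he : ∀ x : Ω, G₁ ⟨x.1, subset_closure x.2⟩ = G₂ ⟨x.1, subset_closure x.2⟩) : G₁ = G₂ :=
  denseRange_inclusion.equalizer h₁ h₂ (funext he)

theorem exists_extFun (f : ↥(CnBarSpace n p Ω E)) :
    ∃ G : closure Ω → E, Continuous G ∧ ∀ x : Ω, G ⟨x.1, subset_closure x.2⟩ = f.1 x := by
  obtain ⟨g, hg, hfg, hext⟩ := f.2
  obtain ⟨G, hc, hG⟩ := hext 0 (Nat.zero_le n)
  refine ⟨fun z => (continuousMultilinearCurryFin0 ℝ (Fin p → ℝ) E) (G z),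
    (LinearIsometryEquiv.continuous _).comp hc, fun x => ?_⟩
  dsimp only
  rw [hG, iteratedFDerivWithin_zero_eq_comp, hfg x]
  rfl

noncomputable def extMap (f : ↥(CnBarSpace n p Ω E)) : closure Ω → E :=
  (exists_extFun f).choose

theorem extMap_continuous (f : ↥(CnBarSpace n p Ω E)) : Continuous (extMap f) :=
  (exists_extFun f).choose_spec.1

theorem extMap_apply (f : ↥(CnBarSpace n p Ω E)) (x : Ω) :
    extMap f ⟨x.1, subset_closure x.2⟩ = f.1 x :=
  (exists_extFun f).choose_spec.2 x

theorem extMap_eq {f : ↥(CnBarSpace n p Ω E)} {G : closure Ω → E} (hc : Continuous G)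
    (hG : ∀ x : Ω, G ⟨x.1, subset_closure x.2⟩ = f.1 x) : extMap f = G :=
  ext_unique (extMap_continuous f) hc (fun x => by rw [extMap_apply, hG])

theorem extMap_sum {ι : Type*} (J : Finset ι) (u : ι → ↥(CnBarSpace n p Ω E))
    (w : ↥(CnBarSpace n p Ω E)) (hw : ∀ x : Ω, w.1 x = ∑ i ∈ J, (u i).1 x) :
    extMap w = fun z => ∑ i ∈ J, extMap (u i) z := by
  refine extMap_eq (continuous_finset_sum _ fun i _ => extMap_continuous (u i)) (fun x => ?_)
  · rw [hw x]
    exact Finset.sum_congr rfl (fun i _ => extMap_apply (u i) x)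

/-- the key "zero propagation" lemma -/
theorem extMap_eq_zero_of_disjoint {f g : ↥(CnBarSpace n p Ω E)}
    (hdisj : ∀ x : Ω, f.1 x = 0 ∨ g.1 x = 0) {z : closure Ω} (hg : extMap g z ≠ 0) :
    extMap f z = 0 := by
  have hWopen : IsOpen ((extMap g) ⁻¹' ({0}ᶜ)) :=
    (isClosed_singleton.preimage (extMap_continuous g)).isOpen_compl
  obtain ⟨O, hO, hWO⟩ := isOpen_induced_iff.1 hWopen
  set s : Set (closure Ω) := Subtype.val ⁻¹' (O ∩ Ω) with hs
  have hzW : z ∈ (extMap g) ⁻¹' ({0}ᶜ) := hg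
  have hzO : z.1 ∈ O := by rw [← hWO] at hzW; exact hzW
  have hzs : z ∈ closure s := by
    rw [closure_subtype]
    have himg : Subtype.val '' s = O ∩ Ω := by
      rw [Subtype.image_preimage_coe]
      exact inter_eq_right.2 (inter_subset_right.trans subset_closure)
    rw [himg]
    exact hO.inter_closure ⟨hzO, z.2⟩
  have hsub : s ⊆ (extMap f) ⁻¹' {0} := by
    rintro ⟨t, htc⟩ ⟨htO, htΩ⟩
    have hx : extMap g ⟨t, htc⟩ ≠ 0 := by
      have : (⟨t, htc⟩ : closure Ω) ∈ (extMap g) ⁻¹' ({0}ᶜ) := by rw [← hWO]; exact htO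
      exact this
    have hx2 : g.1 ⟨t, htΩ⟩ ≠ 0 := by
      rw [← extMap_apply g ⟨t, htΩ⟩]; exact hx
    have hf0 : f.1 ⟨t, htΩ⟩ = 0 := (hdisj ⟨t, htΩ⟩).resolve_right hx2
    show extMap f ⟨t, htc⟩ = 0
    exact (extMap_apply f ⟨t, htΩ⟩).trans hf0
  have : z ∈ (extMap f) ⁻¹' {0} :=
    closure_minimal hsub (isClosed_singleton.preimage (extMap_continuous f)) hzs
  exact this



/-! ### Cozero sets and sums -/

def coz {p : ℕ} {Ω : Set (Fin p → ℝ)} {E : Type*} [NormedAddCommGroup E]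
    (f : Ω → E) : Set (Fin p → ℝ) := Subtype.val '' {x | f x ≠ 0}

theorem mem_coz {p : ℕ} {Ω : Set (Fin p → ℝ)} {E : Type*} [NormedAddCommGroup E]
    {f : Ω → E} (x : Ω) (hx : f x ≠ 0) : x.1 ∈ coz f := ⟨x, hx, rfl⟩

theorem coz_subset {p : ℕ} {Ω : Set (Fin p → ℝ)} {E : Type*} [NormedAddCommGroup E]
    {f : Ω → E} {s : Set (Fin p → ℝ)} (h : ∀ x : Ω, x.1 ∉ s → f x = 0) : coz f ⊆ s := by
  rintro t ⟨x, hx, rfl⟩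
  by_contra hts
  exact hx (h x hts)

theorem zero_mem_cn (hΩ : IsOpen Ω) : (0 : Ω → E) ∈ CnBarSpace n p Ω E :=
  const_mem hΩ 0

theorem sum_mem_cn (hΩ : IsOpen Ω) {ι : Type*} (J : Finset ι) (u : ι → Ω → E)
    (hu : ∀ i ∈ J, u i ∈ CnBarSpace n p Ω E) : (∑ i ∈ J, u i) ∈ CnBarSpace n p Ω E := by
  classical
  induction J using Finset.induction_on with
  | empty => rw [Finset.sum_empty]; exact zero_mem_cn hΩ
  | @insert a J' ha IH =>
    rw [Finset.sum_insert ha]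
    exact CnBarSpace.add_mem hΩ (hu a (Finset.mem_insert_self a J'))
      (IH (fun i hi => hu i (Finset.mem_insert_of_mem hi)))

section TwoSided

variable {m q : ℕ} {Ω' : Set (Fin q → ℝ)} {F : Type*}
  [NormedAddCommGroup F] [NormedSpace ℝ F]

theorem T_sum (hΩ : IsOpen Ω)
    (T : ↥(CnBarSpace n p Ω E) → ↥(CnBarSpace m q Ω' F))
    (hTadd : ∀ (f g : ↥(CnBarSpace n p Ω E)) (hfg : f.1 + g.1 ∈ CnBarSpace n p Ω E),
      (T ⟨f.1 + g.1, hfg⟩).1 = (T f).1 + (T g).1)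
    {ι : Type*} (J : Finset ι) (u : ι → ↥(CnBarSpace n p Ω E)) (w : ↥(CnBarSpace n p Ω E))
    (hw : w.1 = ∑ i ∈ J, (u i).1) : (T w).1 = ∑ i ∈ J, (T (u i)).1 := by
  classical
  induction J using Finset.induction_on generalizing w with
  | empty =>
    have h0 : w.1 = 0 := by simpa using hw
    have hsum : w.1 + w.1 = w.1 := by rw [h0]; simp
    have hmem : w.1 + w.1 ∈ CnBarSpace n p Ω E := by rw [hsum]; exact w.2
    have heq : (⟨w.1 + w.1, hmem⟩ : ↥(CnBarSpace n p Ω E)) = w := Subtype.ext hsum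
    have := hTadd w w hmem
    rw [heq] at this
    have : (T w).1 = 0 := by
      have h2 := left_eq_add.1 this
      exact h2
    simpa using this
  | @insert a J' ha IH =>
    set wrest : ↥(CnBarSpace n p Ω E) :=
      ⟨∑ i ∈ J', (u i).1, sum_mem_cn hΩ J' _ (fun i _ => (u i).2)⟩ with hwrest
    have hsum : (u a).1 + wrest.1 = w.1 := by rw [hw, Finset.sum_insert ha]
    have hmem : (u a).1 + wrest.1 ∈ CnBarSpace n p Ω E := by rw [hsum]; exact w.2
    have heq : (⟨(u a).1 + wrest.1, hmem⟩ : ↥(CnBarSpace n p Ω E)) = w := Subtype.ext hsum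
    have hT := hTadd (u a) wrest hmem
    rw [heq] at hT
    rw [hT, IH wrest rfl, Finset.sum_insert ha]

theorem contDiff_finset_prod {ι : Type*} (J : Finset ι) (b : ι → (Fin p → ℝ) → ℝ)
    (hb : ∀ i, ∀ j : ℕ, ContDiff ℝ j (b i)) (j : ℕ) :
    ContDiff ℝ j (fun t => ∏ i ∈ J, b i t) := by
  classical
  induction J using Finset.induction_on with
  | empty => simpa using contDiff_const (c := (1:ℝ))
  | @insert a J' ha IH =>
    have : (fun t => ∏ i ∈ insert a J', b i t) = fun t => b a t * ∏ i ∈ J', b i t := by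
      funext t; rw [Finset.prod_insert ha]
    rw [this]
    exact (hb a j).mul IH

theorem telescope_sum (bb : ℕ → (Fin p → ℝ) → ℝ) (M : ℕ) (t : Fin p → ℝ) :
    ∑ j ∈ Finset.range M, (bb j t * ∏ l ∈ Finset.range j, (1 - bb l t))
      = 1 - ∏ l ∈ Finset.range M, (1 - bb l t) := by
  induction M with
  | zero => simp
  | succ M IH => rw [Finset.sum_range_succ, Finset.prod_range_succ, IH]; ring

theorem exists_support_map
    (hΩ : IsOpen Ω) (hΩbd : Bornology.IsBounded Ω)
    (T : ↥(CnBarSpace n p Ω E) → ↥(CnBarSpace m q Ω' F))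
    (hTadd : ∀ (f g : ↥(CnBarSpace n p Ω E)) (hfg : f.1 + g.1 ∈ CnBarSpace n p Ω E),
      (T ⟨f.1 + g.1, hfg⟩).1 = (T f).1 + (T g).1)
    (hTsep : ∀ f g : ↥(CnBarSpace n p Ω E), (∀ x : Ω, f.1 x = 0 ∨ g.1 x = 0) →
      ∀ y : Ω', (T f).1 y = 0 ∨ (T g).1 y = 0)
    (f₀ : ↥(CnBarSpace n p Ω E)) (hf₀ : ∀ y : closure Ω', extMap (T f₀) y ≠ 0) :
    ∃ h : closure Ω' → closure Ω, Continuous h ∧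
      ∀ (y : closure Ω') (f : ↥(CnBarSpace n p Ω E)),
        extMap (T f) y ≠ 0 → (h y).1 ∈ closure (coz f.1) := by
  classical
  have hK : IsCompact (closure Ω) := hΩbd.isCompact_closure
  -- Step 1: the support point exists for every y
  have key : ∀ y : closure Ω', ∃ z : closure Ω,
      ∀ f, extMap (T f) y ≠ 0 → z.1 ∈ closure (coz f.1) := by
    intro y
    by_contra hcon
    push_neg at hcon
    choose ff hff1 hff2 using hcon
    have hop : ∀ z : closure Ω, ∃ ε > 0, ball z.1 ε ⊆ (closure (coz (ff z).1))ᶜ := by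
      intro z
      exact Metric.isOpen_iff.1 isClosed_closure.isOpen_compl z.1 (hff2 z)
    choose eps heps hball using hop
    have hcover : closure Ω ⊆ ⋃ z : closure Ω, ball z.1 (eps z / 3) := by
      intro x hx
      exact mem_iUnion.2 ⟨⟨x, hx⟩, mem_ball_self (by have := heps ⟨x, hx⟩; linarith)⟩
    obtain ⟨t, ht⟩ := hK.elim_finite_subcover (fun z : closure Ω => ball z.1 (eps z / 3))
      (fun z => isOpen_ball) hcover
    set N := t.card with hN
    set xs : Fin N → ↥(closure Ω) := fun j => (t.equivFin.symm j).1 with hxs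
    let bFn : ∀ j : Fin N, ContDiffBump ((xs j).1 : Fin p → ℝ) := fun j =>
      ⟨eps (xs j) / 3, eps (xs j) / 2, by have := heps (xs j); linarith,
        by have := heps (xs j); linarith⟩
    set bb : ℕ → (Fin p → ℝ) → ℝ :=
      fun j => if h : j < N then (fun s => bFn ⟨j, h⟩ s) else 0 with hbb
    have hbbsmooth : ∀ j, ∀ j₀ : ℕ, ContDiff ℝ j₀ (bb j) := by
      intro j j₀
      by_cases h : j < N
      · simp only [hbb, dif_pos h]
        exact_mod_cast (bFn ⟨j, h⟩).contDiff (n := (j₀ : ℕ∞))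
      · simp only [hbb, dif_neg h]
        exact contDiff_const
    set φ : ℕ → (Fin p → ℝ) → ℝ :=
      fun j s => bb j s * ∏ l ∈ Finset.range j, (1 - bb l s) with hφ
    have hφsmooth : ∀ j, ∀ j₀ : ℕ, ContDiff ℝ j₀ (φ j) := by
      intro j j₀
      exact (hbbsmooth j j₀).mul
        (contDiff_finset_prod (Finset.range j) (fun l s => 1 - bb l s)
          (fun l j₁ => contDiff_const.sub (hbbsmooth l j₁)) j₀)
    set ws : ℕ → ↥(CnBarSpace n p Ω E) :=
      fun j => ⟨fun s => φ j s.1 • f₀.1 s, smul_mem hΩ (hφsmooth j) f₀.2⟩ with hws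
    have hwsum : f₀.1 = ∑ j ∈ Finset.range N, (ws j).1 := by
      funext s
      rw [Finset.sum_apply]
      have h2 : ∑ j ∈ Finset.range N, (ws j).1 s
          = (∑ j ∈ Finset.range N, φ j s.1) • f₀.1 s := by
        rw [Finset.sum_smul]
      rw [h2, telescope_sum]
      -- the product vanishes on Ω
      obtain ⟨z, hzt, hzb⟩ : ∃ z ∈ t, s.1 ∈ ball z.1 (eps z / 3) := by
        have := ht (subset_closure s.2)
        simpa using this
      set j : Fin N := t.equivFin ⟨z, hzt⟩ with hj
      have hxsj : xs j = z := by simp [hxs, hj]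
      have hbj : bb j.1 s.1 = 1 := by
        have hlt : j.1 < N := j.2
        simp only [hbb, dif_pos hlt]
        have : s.1 ∈ closedBall ((xs ⟨j.1, hlt⟩).1 : Fin p → ℝ) (eps (xs ⟨j.1, hlt⟩) / 3) := by
          have : (⟨j.1, hlt⟩ : Fin N) = j := by ext; rfl
          rw [this, hxsj]
          exact ball_subset_closedBall hzb
        exact ContDiffBump.one_of_mem_closedBall _ this
      have hprod : ∏ l ∈ Finset.range N, (1 - bb l s.1) = 0 :=
        Finset.prod_eq_zero (Finset.mem_range.2 j.2) (by rw [hbj]; ring)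
      rw [hprod]
      simp
    have hTf₀ : (T f₀).1 = ∑ j ∈ Finset.range N, (T (ws j)).1 :=
      T_sum hΩ T hTadd (Finset.range N) ws f₀ hwsum
    have hext : extMap (T f₀) = fun z => ∑ j ∈ Finset.range N, extMap (T (ws j)) z :=
      extMap_sum (Finset.range N) (fun j => T (ws j)) (T f₀)
        (fun x => by rw [hTf₀]; rw [Finset.sum_apply])
    have hzero : ∀ j ∈ Finset.range N, extMap (T (ws j)) y = 0 := by
      intro j hj
      have hlt : j < N := Finset.mem_range.1 hj
      set z : ↥(closure Ω) := xs ⟨j, hlt⟩ with hz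
      have hdisj : ∀ s : Ω, (ws j).1 s = 0 ∨ (ff z).1 s = 0 := by
        intro s
        by_cases hφ0 : φ j s.1 = 0
        · left; show φ j s.1 • f₀.1 s = 0; rw [hφ0, zero_smul]
        · right
          have hbbne : bb j s.1 ≠ 0 := fun h0 => hφ0 (by rw [hφ]; dsimp only; rw [h0, zero_mul])
          have hsupp : s.1 ∈ ball (z.1 : Fin p → ℝ) (eps z / 2) := by
            have : bb j s.1 = bFn ⟨j, hlt⟩ s.1 := by simp only [hbb, dif_pos hlt]
            rw [this] at hbbne
            have := Function.mem_support.2 hbbne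
            rwa [ContDiffBump.support_eq] at this
          have hnotin : s.1 ∉ closure (coz (ff z).1) := by
            apply hball z
            exact ball_subset_ball (by have := heps z; linarith) hsupp
          by_contra hne
          exact hnotin (subset_closure (mem_coz s hne))
      have := hTsep (ws j) (ff z) hdisj
      exact extMap_eq_zero_of_disjoint this (hff1 z)
    have : extMap (T f₀) y = 0 := by
      rw [hext]
      exact Finset.sum_eq_zero hzero
    exact hf₀ y this
  choose h hspec using key
  refine ⟨h, ?_, hspec⟩
  -- Step 2: continuity
  have hvalcont : Continuous (fun y => ((h y).1 : Fin p → ℝ)) := by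
    rw [continuous_iff_continuousAt]
    intro y₀
    rw [ContinuousAt, Metric.tendsto_nhds]
    intro ε hε
    set x₀ := h y₀ with hx₀
    let ψb : ContDiffBump (x₀.1 : Fin p → ℝ) := ⟨ε/4, ε/2, by linarith, by linarith⟩
    have hψs : ∀ j : ℕ, ContDiff ℝ j (fun s => ψb s) := fun j =>
      by exact_mod_cast ψb.contDiff (n := (j : ℕ∞))
    have h1ψs : ∀ j : ℕ, ContDiff ℝ j (fun s => 1 - ψb s) := fun j =>
      contDiff_const.sub (hψs j)
    set w₁ : ↥(CnBarSpace n p Ω E) :=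
      ⟨fun s => ψb s.1 • f₀.1 s, smul_mem hΩ hψs f₀.2⟩ with hw₁
    set w₂ : ↥(CnBarSpace n p Ω E) :=
      ⟨fun s => (1 - ψb s.1) • f₀.1 s, smul_mem hΩ h1ψs f₀.2⟩ with hw₂
    have hsum12 : w₁.1 + w₂.1 = f₀.1 := by
      funext s
      show ψb s.1 • f₀.1 s + (1 - ψb s.1) • f₀.1 s = f₀.1 s
      rw [← add_smul]
      ring_nf
      rw [one_smul]
    have hmem12 : w₁.1 + w₂.1 ∈ CnBarSpace n p Ω E := by rw [hsum12]; exact f₀.2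
    have heq12 : (⟨w₁.1 + w₂.1, hmem12⟩ : ↥(CnBarSpace n p Ω E)) = f₀ := Subtype.ext hsum12
    have hText : extMap (T f₀) = fun z => extMap (T w₁) z + extMap (T w₂) z := by
      apply extMap_eq ((extMap_continuous (T w₁)).add (extMap_continuous (T w₂)))
      intro x
      have hT := hTadd w₁ w₂ hmem12
      rw [heq12] at hT
      rw [Pi.add_apply, extMap_apply, extMap_apply, hT]
      rfl
    have hz2 : extMap (T w₂) y₀ = 0 := by
      by_contra hne
      have hmem := hspec y₀ w₂ hne
      have hcozsub : coz w₂.1 ⊆ (ball (x₀.1 : Fin p → ℝ) (ε/4))ᶜ := by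
        apply coz_subset
        intro x hx
        have hxball : x.1 ∈ ball (x₀.1 : Fin p → ℝ) (ε/4) := not_not.1 hx
        have hψ1 : ψb x.1 = 1 := ψb.one_of_mem_closedBall (ball_subset_closedBall hxball)
        show (1 - ψb x.1) • f₀.1 x = 0
        rw [hψ1]; simp
      have hclosed : closure (coz w₂.1) ⊆ (ball (x₀.1 : Fin p → ℝ) (ε/4))ᶜ :=
        closure_minimal hcozsub isOpen_ball.isClosed_compl
      exact (hclosed hmem) (mem_ball_self (by linarith))
    have hz1 : extMap (T w₁) y₀ ≠ 0 := by
      intro h0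
      apply hf₀ y₀
      rw [hText]
      dsimp only
      rw [h0, hz2, add_zero]
    have hNopen : IsOpen {y : ↥(closure Ω') | extMap (T w₁) y ≠ 0} :=
      (isClosed_singleton.preimage (extMap_continuous (T w₁))).isOpen_compl
    filter_upwards [hNopen.mem_nhds hz1] with y hy
    have hmem := hspec y w₁ hy
    have hcozsub : coz w₁.1 ⊆ ball (x₀.1 : Fin p → ℝ) (ε/2) := by
      apply coz_subset
      intro x hx
      show ψb x.1 • f₀.1 x = 0
      have : ψb x.1 = 0 := by
        by_contra hne2
        exact hx (by rw [← ψb.support_eq]; exact Function.mem_support.2 hne2)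
      rw [this, zero_smul]
    have hcb : (h y).1 ∈ closedBall (x₀.1 : Fin p → ℝ) (ε/2) :=
      closure_minimal (hcozsub.trans ball_subset_closedBall) Metric.isClosed_closedBall hmem
    have hd : dist ((h y).1 : Fin p → ℝ) x₀.1 ≤ ε/2 := mem_closedBall.1 hcb
    show dist ((h y).1 : Fin p → ℝ) ((h y₀).1 : Fin p → ℝ) < ε
    rw [← hx₀]
    linarith
  exact hvalcont.subtype_mk _

theorem support_comp_eq_id
    (hΩ : IsOpen Ω) {v : E} (hv : v ≠ 0)
    (T : ↥(CnBarSpace n p Ω E) → ↥(CnBarSpace m q Ω' F))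
    (S : ↥(CnBarSpace m q Ω' F) → ↥(CnBarSpace n p Ω E))
    (hST : ∀ f, S (T f) = f)
    (h₁ : closure Ω' → closure Ω) (cont₁ : Continuous h₁)
    (P1T : ∀ (y : closure Ω') (f : ↥(CnBarSpace n p Ω E)),
      extMap (T f) y ≠ 0 → (h₁ y).1 ∈ closure (coz f.1))
    (h₂ : closure Ω → closure Ω')
    (P1S : ∀ (x : closure Ω) (u : ↥(CnBarSpace m q Ω' F)),
      extMap (S u) x ≠ 0 → (h₂ x).1 ∈ closure (coz u.1)) :
    ∀ x : closure Ω, h₁ (h₂ x) = x := by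
  intro x
  by_contra hne
  have hdist : (0:ℝ) < dist ((h₁ (h₂ x)).1 : Fin p → ℝ) x.1 :=
    dist_pos.2 (fun heq => hne (Subtype.ext heq))
  set r := dist ((h₁ (h₂ x)).1 : Fin p → ℝ) x.1 with hr
  let φ : ContDiffBump (x.1 : Fin p → ℝ) := ⟨r/4, r/2, by linarith, by linarith⟩
  have hφs : ∀ j : ℕ, ContDiff ℝ j (fun s : Fin p → ℝ => φ s • v) := fun j => by
    have h1 : ContDiff ℝ (j:ℕ) (fun s : Fin p → ℝ => (φ s : ℝ)) := by
      exact_mod_cast φ.contDiff (n := (j : ℕ∞))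
    exact h1.smul contDiff_const
  set w : ↥(CnBarSpace n p Ω E) :=
    ⟨fun s : Ω => φ s.1 • v, mem_of_contDiff hΩ hφs⟩ with hw
  have hextw : extMap w = fun z : closure Ω => φ z.1 • v :=
    extMap_eq (((φ.continuous).comp continuous_subtype_val).smul continuous_const)
      (fun s => rfl)
  have hwx : extMap (S (T w)) x ≠ 0 := by
    rw [hST w, hextw]
    have : φ x.1 = 1 := φ.one_of_mem_closedBall (mem_closedBall_self φ.rIn_pos.le)
    dsimp only
    rw [this, one_smul]
    exact hv
  have hyc : (h₂ x).1 ∈ closure (coz (T w).1) := P1S x (T w) hwx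
  set O₁ : Set (Fin p → ℝ) := {t | r/2 < dist t x.1} with hO₁
  have hO₁open : IsOpen O₁ := isOpen_lt continuous_const (continuous_id.dist continuous_const)
  set N : Set (closure Ω') := (fun y' => ((h₁ y').1 : Fin p → ℝ)) ⁻¹' O₁ with hNdef
  have hNopen : IsOpen N := hO₁open.preimage (continuous_subtype_val.comp cont₁)
  have hyN : h₂ x ∈ N := by
    show r/2 < dist ((h₁ (h₂ x)).1 : Fin p → ℝ) x.1
    rw [← hr]; linarith
  obtain ⟨O, hO, hNO⟩ := isOpen_induced_iff.1 hNopen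
  have hyO : ((h₂ x).1 : Fin q → ℝ) ∈ O := by
    have : h₂ x ∈ Subtype.val ⁻¹' O := by rw [hNO]; exact hyN
    exact this
  obtain ⟨t, htO, htcoz⟩ := _root_.mem_closure_iff.1 hyc O hO hyO
  obtain ⟨s, hs, rfl⟩ := htcoz
  set y'' : ↥(closure Ω') := ⟨s.1, subset_closure s.2⟩ with hy''
  have hy''N : y'' ∈ N := by
    rw [← hNO]; exact htO
  have hy''ne : extMap (T w) y'' ≠ 0 := by
    rw [extMap_apply (T w) s]; exact hs
  have hmem := P1T y'' w hy''ne
  have hcozsub : coz w.1 ⊆ ball (x.1 : Fin p → ℝ) (r/2) := by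
    apply coz_subset
    intro z hz
    show φ z.1 • v = 0
    have : φ z.1 = 0 := by
      by_contra hne2
      exact hz (by rw [← φ.support_eq]; exact Function.mem_support.2 hne2)
    rw [this, zero_smul]
  have hcb : ((h₁ y'').1 : Fin p → ℝ) ∈ closedBall (x.1 : Fin p → ℝ) (r/2) :=
    closure_minimal (hcozsub.trans ball_subset_closedBall) Metric.isClosed_closedBall hmem
  have h1 : dist ((h₁ y'').1 : Fin p → ℝ) x.1 ≤ r/2 := mem_closedBall.1 hcb
  have h2 : r/2 < dist ((h₁ y'').1 : Fin p → ℝ) x.1 := hy''N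
  linarith

end TwoSided

end Stmt18

/-- If `n, m ≥ 1`, `Ω ⊆ ℝ^p`, `Ω' ⊆ ℝ^q` are nonempty bounded open sets, `E`,
`F` nontrivial real Banach spaces, and there exists a biseparating map
`T : C^n(Ω̄,E) → C^m(Ω̄',F)`, then the closures of `Ω` and `Ω'` are homeomorphic. -/
theorem stmt_18 {n m p q : ℕ} (hn : 1 ≤ n) (hm : 1 ≤ m)
    {Ω : Set (Fin p → ℝ)} {Ω' : Set (Fin q → ℝ)}
    (hΩ : IsOpen Ω) (hΩne : Ω.Nonempty) (hΩbd : Bornology.IsBounded Ω)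
    (hΩ' : IsOpen Ω') (hΩ'ne : Ω'.Nonempty) (hΩ'bd : Bornology.IsBounded Ω')
    {E F : Type*}
    [NormedAddCommGroup E] [NormedSpace ℝ E] [Nontrivial E] [CompleteSpace E]
    [NormedAddCommGroup F] [NormedSpace ℝ F] [Nontrivial F] [CompleteSpace F]
    (T : CnBarSpace n p Ω E → CnBarSpace m q Ω' F)
    (hbij : Function.Bijective T)
    (hadd : ∀ f g : CnBarSpace n p Ω E,
      T ⟨f.1 + g.1, CnBarSpace.add_mem hΩ f.2 g.2⟩ =
        ⟨(T f).1 + (T g).1, CnBarSpace.add_mem hΩ' (T f).2 (T g).2⟩)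
    (hsep : ∀ f g : CnBarSpace n p Ω E,
      (∀ x : Ω, ‖f.1 x‖ * ‖g.1 x‖ = 0) → ∀ y : Ω', ‖(T f).1 y‖ * ‖(T g).1 y‖ = 0)
    (hsep' : ∀ f g : CnBarSpace n p Ω E,
      (∀ y : Ω', ‖(T f).1 y‖ * ‖(T g).1 y‖ = 0) → ∀ x : Ω, ‖f.1 x‖ * ‖g.1 x‖ = 0) :
    Nonempty (closure Ω ≃ₜ closure Ω') := by
  classical
  obtain ⟨v, hv⟩ := exists_ne (0 : E)
  obtain ⟨v', hv'⟩ := exists_ne (0 : F)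
  set e := Equiv.ofBijective T hbij with he
  set S : ↥(CnBarSpace m q Ω' F) → ↥(CnBarSpace n p Ω E) := ⇑e.symm with hS
  have hTS : ∀ u, T (S u) = u := fun u => e.apply_symm_apply u
  have hST : ∀ f, S (T f) = f := fun f => e.symm_apply_apply f
  have hTadd : ∀ (f g : ↥(CnBarSpace n p Ω E)) (hfg : f.1 + g.1 ∈ CnBarSpace n p Ω E),
      (T ⟨f.1 + g.1, hfg⟩).1 = (T f).1 + (T g).1 := by
    intro f g hfg
    rw [show (⟨f.1 + g.1, hfg⟩ : ↥(CnBarSpace n p Ω E))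
      = ⟨f.1 + g.1, CnBarSpace.add_mem hΩ f.2 g.2⟩ from rfl, hadd f g]
  have hSadd : ∀ (u w : ↥(CnBarSpace m q Ω' F)) (huw : u.1 + w.1 ∈ CnBarSpace m q Ω' F),
      (S ⟨u.1 + w.1, huw⟩).1 = (S u).1 + (S w).1 := by
    intro u w huw
    have hmem : (S u).1 + (S w).1 ∈ CnBarSpace n p Ω E :=
      CnBarSpace.add_mem hΩ (S u).2 (S w).2
    have h1 : T ⟨(S u).1 + (S w).1, hmem⟩ = ⟨u.1 + w.1, huw⟩ := by
      apply Subtype.ext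
      rw [hTadd (S u) (S w) hmem, hTS u, hTS w]
    have h2 : S ⟨u.1 + w.1, huw⟩ = ⟨(S u).1 + (S w).1, hmem⟩ := by
      rw [← h1, hST]
    rw [h2]
  have hTsep : ∀ f g : ↥(CnBarSpace n p Ω E), (∀ x : Ω, f.1 x = 0 ∨ g.1 x = 0) →
      ∀ y : Ω', (T f).1 y = 0 ∨ (T g).1 y = 0 := by
    intro f g hd y
    have := hsep f g (fun x => by rcases hd x with h | h <;> simp [h]) y
    rcases mul_eq_zero.1 this with h | h
    · exact Or.inl (norm_eq_zero.1 h)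
    · exact Or.inr (norm_eq_zero.1 h)
  have hSsep : ∀ u w : ↥(CnBarSpace m q Ω' F), (∀ y : Ω', u.1 y = 0 ∨ w.1 y = 0) →
      ∀ x : Ω, (S u).1 x = 0 ∨ (S w).1 x = 0 := by
    intro u w hd x
    have hyp : ∀ y : Ω', ‖(T (S u)).1 y‖ * ‖(T (S w)).1 y‖ = 0 := by
      intro y
      rw [hTS u, hTS w]
      rcases hd y with h | h <;> simp [h]
    have := hsep' (S u) (S w) hyp x
    rcases mul_eq_zero.1 this with h | h
    · exact Or.inl (norm_eq_zero.1 h)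
    · exact Or.inr (norm_eq_zero.1 h)
  -- basepoint functions
  set c : ↥(CnBarSpace n p Ω E) := ⟨fun _ => v, Stmt18.const_mem hΩ v⟩ with hc
  set c' : ↥(CnBarSpace m q Ω' F) := ⟨fun _ => v', Stmt18.const_mem hΩ' v'⟩ with hc'
  have hf₀ : ∀ y : closure Ω', Stmt18.extMap (T (S c')) y ≠ 0 := by
    intro y
    rw [hTS c', Stmt18.extMap_eq (f := c') continuous_const (fun _ => rfl)]
    exact hv'
  have hg₀ : ∀ x : closure Ω, Stmt18.extMap (S (T c)) x ≠ 0 := by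
    intro x
    rw [hST c, Stmt18.extMap_eq (f := c) continuous_const (fun _ => rfl)]
    exact hv
  obtain ⟨h₁, cont₁, P1T⟩ :=
    Stmt18.exists_support_map hΩ hΩbd T hTadd hTsep (S c') hf₀
  obtain ⟨h₂, cont₂, P1S⟩ :=
    Stmt18.exists_support_map hΩ' hΩ'bd S hSadd hSsep (T c) hg₀
  have hcomp1 : ∀ x : closure Ω, h₁ (h₂ x) = x :=
    Stmt18.support_comp_eq_id hΩ hv T S hST h₁ cont₁ P1T h₂ P1S
  have hcomp2 : ∀ y : closure Ω', h₂ (h₁ y) = y :=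
    Stmt18.support_comp_eq_id hΩ' hv' S T hTS h₂ cont₂ P1S h₁ P1T
  exact ⟨⟨⟨h₂, h₁, hcomp1, hcomp2⟩, cont₂, cont₁⟩⟩
end
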